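/- arXiv:1808.10056 — 4 statements merged into one kernel-verified Lean document; each statement's English description precedes it below -/
import Mathlib

section
/- For any hypothesized probability densities P_0, P_1 on the reals with A = sup_x log(P_1(x)/P_0(x)) − inf_{x'} log(P_1(x')/P_0(x')) finite, any privacy parameter ε > 0, any database size n, any pair of neighboring databases X, X' ∈ ℝ^n (differing in exactly one entry), and any index i ∈ {1,…,n}: if Z_1,…,Z_n are independent Laplace(A/ε) random variables, ℓ(k,X) = Σ_{j=k}^n log(P_1(x_j)/P_0(x_j)), and k̃(X) = argmax_{1≤k≤n} (ℓ(k,X) + Z_k), then Pr[k̃(X) = i] ≤ e^ε · Pr[k̃(X') = i]. (That is, OfflinePCPD with δ = 0 is (ε,0)-differentially private.) -/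
open MeasureTheory ProbabilityTheory
open scoped ENNReal

/-- The measure on `ℝ` with density `P` with respect to Lebesgue measure. -/
noncomputable def densityMeasure (P : ℝ → ℝ) : Measure ℝ :=
  volume.withDensity fun x => ENNReal.ofReal (P x)

/-- The Laplace distribution with scale `b`, with density `(1/(2b)) exp (-|x|/b)`. -/
noncomputable def laplaceMeasure (b : ℝ) : Measure ℝ :=
  volume.withDensity fun x => ENNReal.ofReal (Real.exp (-|x| / b) / (2 * b))

/-- `P` is a probability density on `ℝ`. -/
structure IsDensity (P : ℝ → ℝ) : Prop where
  measurable : Measurable P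
  nonneg : ∀ x, 0 ≤ P x
  integral_one : ∫ x, P x = 1

lemma laplace_shift (b A : ℝ) (hb : 0 < b) (hA : 0 ≤ A) (m : ℝ) :
    laplaceMeasure b (Set.Ici m)
      ≤ ENNReal.ofReal (Real.exp (A / b)) * laplaceMeasure b (Set.Ioi (m + A)) := by
  have hfm : Measurable fun x : ℝ => ENNReal.ofReal (Real.exp (-|x| / b) / (2 * b)) := by
    measurability
  have hac : laplaceMeasure b ≪ volume := withDensity_absolutelyContinuous _ _
  haveI : NullSingletonClass (laplaceMeasure b) := ⟨fun x => hac (measure_singleton x)⟩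
  have h0 : laplaceMeasure b (Set.Ioi (m + A)) = laplaceMeasure b (Set.Ici (m + A)) :=
    measure_congr Ioi_ae_eq_Ici
  rw [h0]
  have h1 : laplaceMeasure b (Set.Ici m)
      = ∫⁻ x in Set.Ici m, ENNReal.ofReal (Real.exp (-|x| / b) / (2 * b)) :=
    withDensity_apply _ measurableSet_Ici
  have h2 : laplaceMeasure b (Set.Ici (m + A))
      = ∫⁻ x in Set.Ici (m + A), ENNReal.ofReal (Real.exp (-|x| / b) / (2 * b)) :=
    withDensity_apply _ measurableSet_Ici
  have h3 : (∫⁻ x in Set.Ici (m + A), ENNReal.ofReal (Real.exp (-|x| / b) / (2 * b)))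
      = ∫⁻ x in Set.Ici m, ENNReal.ofReal (Real.exp (-|x + A| / b) / (2 * b)) := by
    rw [← lintegral_indicator measurableSet_Ici, ← lintegral_indicator measurableSet_Ici]
    have := (measurePreserving_add_right volume A).lintegral_comp
      (f := (Set.Ici (m + A)).indicator fun x => ENNReal.ofReal (Real.exp (-|x| / b) / (2 * b)))
      (hfm.indicator measurableSet_Ici)
    rw [← this]
    congr 1
    ext x
    by_cases hx : m ≤ x
    · simp [Set.indicator_of_mem, Set.mem_Ici.mpr hx,
        Set.mem_Ici.mpr (show m + A ≤ x + A by linarith)]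
    · rw [Set.indicator_of_notMem (by simp only [Set.mem_Ici, not_le]; linarith [not_le.mp hx]),
        Set.indicator_of_notMem (by simpa using hx)]
  rw [h1, h2, h3, ← lintegral_const_mul' _ _ (by simp : ENNReal.ofReal (Real.exp (A / b)) ≠ ⊤)]
  refine lintegral_mono fun x => ?_
  rw [← ENNReal.ofReal_mul (Real.exp_nonneg _)]
  refine ENNReal.ofReal_le_ofReal ?_
  have key : Real.exp (-|x| / b) ≤ Real.exp (A / b) * Real.exp (-|x + A| / b) := by
    rw [← Real.exp_add]
    apply Real.exp_le_exp.mpr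
    have habs : |x + A| ≤ |x| + A := by
      calc |x + A| ≤ |x| + |A| := abs_add_le _ _
        _ = |x| + A := by rw [abs_of_nonneg hA]
    rw [← add_div]
    exact div_le_div_of_nonneg_right (by linarith) hb.le |>.trans_eq rfl
  calc Real.exp (-|x| / b) / (2 * b)
      ≤ (Real.exp (A / b) * Real.exp (-|x + A| / b)) / (2 * b) := by gcongr
    _ = Real.exp (A / b) * (Real.exp (-|x + A| / b) / (2 * b)) := by ring

lemma pcpd_core {Ω : Type*} [MeasurableSpace Ω] (Prb : Measure Ω) [IsProbabilityMeasure Prb]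
    (A ε : ℝ) (hApos : 0 < A) (hε : 0 < ε)
    (n : ℕ) (hn : 1 ≤ n) (c c' : ℕ → ℝ) (i : ℕ) (hi : i ∈ Finset.Icc 1 n)
    (hsens : ∀ k ∈ Finset.Icc 1 n, c' k - c' i ≤ c k - c i + A)
    (Z : ℕ → Ω → ℝ) (hZmeas : ∀ k, Measurable (Z k))
    (hZindep : iIndepFun
        (fun k : Fin n => Z ((k : ℕ) + 1)) Prb)
    (hZlawi : Measure.map (Z i) Prb = laplaceMeasure (A / ε))
    (K K' : Ω → ℕ)
    (hK : ∀ ω, K ω ∈ Finset.Icc 1 n ∧ ∀ k ∈ Finset.Icc 1 n,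
        c k + Z k ω ≤ c (K ω) + Z (K ω) ω)
    (hK' : ∀ ω, K' ω ∈ Finset.Icc 1 n ∧ ∀ k ∈ Finset.Icc 1 n,
        c' k + Z k ω ≤ c' (K' ω) + Z (K' ω) ω) :
    Prb {ω | K ω = i} ≤ ENNReal.ofReal (Real.exp ε) * Prb {ω | K' ω = i} := by
  obtain ⟨hi1, hi2⟩ := Finset.mem_Icc.mp hi
  have hone : (1 : ℝ≥0∞) ≤ ENNReal.ofReal (Real.exp ε) := by
    rw [← ENNReal.ofReal_one]
    exact ENNReal.ofReal_le_ofReal (Real.one_le_exp hε.le)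
  rcases eq_or_lt_of_le hn with hn1 | hn2
  · -- n = 1
    have hKset : {ω | K ω = i} = Set.univ := by
      ext ω
      have := Finset.mem_Icc.mp (hK ω).1
      simp only [Set.mem_setOf_eq, Set.mem_univ, iff_true]
      omega
    have hK'set : {ω | K' ω = i} = Set.univ := by
      ext ω
      have := Finset.mem_Icc.mp (hK' ω).1
      simp only [Set.mem_setOf_eq, Set.mem_univ, iff_true]
      omega
    rw [hKset, hK'set, measure_univ, mul_one]
    exact hone
  -- main case : 2 ≤ n
  set b : ℝ := A / ε with hb
  have hbpos : 0 < b := div_pos hApos hε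
  have hAb : A / b = ε := by rw [hb]; field_simp
  set ν : Measure ℝ := laplaceMeasure b with hνdef
  haveI hνprob : IsProbabilityMeasure ν := by
    rw [← hZlawi]
    exact Measure.isProbabilityMeasure_map (hZmeas i).aemeasurable
  set i₀ : Fin n := ⟨i - 1, by omega⟩ with hi₀def
  have hi₀ : (i₀ : ℕ) + 1 = i := by simp only [hi₀def]; omega
  set T : Finset (Fin n) := Finset.univ.erase i₀ with hTdef
  have hT : T.Nonempty := by
    rw [← Finset.card_pos, hTdef, Finset.card_erase_of_mem (Finset.mem_univ _),
      Finset.card_univ, Fintype.card_fin]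
    omega
  have hmemIcc : ∀ k : Fin n, ((k : ℕ) + 1) ∈ Finset.Icc 1 n := by
    intro k
    have := k.isLt
    exact Finset.mem_Icc.mpr ⟨by omega, by omega⟩
  set M : Ω → ℝ := fun ω => T.sup' hT (fun k => c ((k : ℕ) + 1) - c i + Z ((k : ℕ) + 1) ω)
    with hMdef
  have hMmeas : Measurable M := by
    have : M = T.sup' hT (fun k => fun ω => c ((k : ℕ) + 1) - c i + Z ((k : ℕ) + 1) ω) := by
      funext ω
      rw [Finset.sup'_apply]
    rw [this]
    exact Finset.measurable_sup' hT (fun k _ => (hZmeas _).const_add _)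
  -- independence of M and Z i
  have hTa : T.attach.Nonempty := hT.attach
  set ψ : ({x // x ∈ T} → ℝ) → ℝ :=
    T.attach.sup' hTa (fun t => fun v => c (((t : Fin n) : ℕ) + 1) - c i + v t) with hψdef
  have hψmeas : Measurable ψ :=
    Finset.measurable_sup' hTa (fun t _ => (measurable_pi_apply t).const_add _)
  set φ : ({x // x ∈ ({i₀} : Finset (Fin n))} → ℝ) → ℝ :=
    fun v => v ⟨i₀, Finset.mem_singleton_self i₀⟩ with hφdef
  have hφmeas : Measurable φ := measurable_pi_apply _
  have hdisj : Disjoint ({i₀} : Finset (Fin n)) T :=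
    Finset.disjoint_singleton_left.mpr (Finset.notMem_erase _ _)
  have hindFin := hZindep.indepFun_finset {i₀} T hdisj (fun k => hZmeas _)
  have hInd : IndepFun (Z i) M Prb := by
    have h := hindFin.comp hφmeas hψmeas
    have h1 : (φ ∘ fun a (k : {x // x ∈ ({i₀} : Finset (Fin n))}) =>
        Z (((k : Fin n) : ℕ) + 1) a) = Z i := by
      funext ω
      simp only [Function.comp_apply, hφdef, hi₀]
    have h2 : (ψ ∘ fun a (k : {x // x ∈ T}) => Z (((k : Fin n) : ℕ) + 1) a) = M := by
      funext ω
      simp only [Function.comp_apply, hψdef, hMdef]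
      rw [Finset.sup'_apply]
      apply le_antisymm
      · exact Finset.sup'_le _ _ fun t _ =>
          Finset.le_sup' (fun k : Fin n =>
            c ((k : ℕ) + 1) - c i + Z ((k : ℕ) + 1) ω) t.2
      · exact Finset.sup'_le _ _ fun k hk =>
          Finset.le_sup' (fun t : {x // x ∈ T} =>
            c (((t : Fin n) : ℕ) + 1) - c i + Z (((t : Fin n) : ℕ) + 1) ω)
            (Finset.mem_attach T ⟨k, hk⟩)
    rwa [h1, h2] at h
  have hIndMZ : IndepFun M (Z i) Prb := hInd.symm
  set μM : Measure ℝ := Measure.map M Prb with hμMdef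
  haveI : IsProbabilityMeasure μM := Measure.isProbabilityMeasure_map hMmeas.aemeasurable
  have hmapprod : Measure.map (fun ω => (M ω, Z i ω)) Prb = μM.prod ν := by
    rw [← hZlawi]
    exact (indepFun_iff_map_prod_eq_prod_map_map hMmeas.aemeasurable
      (hZmeas i).aemeasurable).mp hIndMZ
  -- event inclusions
  have hE : {ω | K ω = i} ⊆ {ω | M ω ≤ Z i ω} := by
    intro ω hω
    simp only [Set.mem_setOf_eq] at hω ⊢
    rw [hMdef]
    apply Finset.sup'_le
    intro k hk
    have h := (hK ω).2 ((k : ℕ) + 1) (hmemIcc k)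
    rw [hω] at h
    linarith
  have hF : {ω | M ω + A < Z i ω} ⊆ {ω | K' ω = i} := by
    intro ω hω
    simp only [Set.mem_setOf_eq] at hω ⊢
    by_contra hne
    have hk'mem := (hK' ω).1
    obtain ⟨hk'1, hk'2⟩ := Finset.mem_Icc.mp hk'mem
    set k₀ : Fin n := ⟨K' ω - 1, by omega⟩ with hk₀def
    have hk₀1 : (k₀ : ℕ) + 1 = K' ω := by simp only [hk₀def]; omega
    have hk₀T : k₀ ∈ T := by
      rw [hTdef, Finset.mem_erase]
      refine ⟨?_, Finset.mem_univ _⟩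
      intro hcontra
      apply hne
      have : (k₀ : ℕ) = (i₀ : ℕ) := by rw [hcontra]
      simp only [hk₀def, hi₀def] at this
      omega
    have hle : c ((k₀ : ℕ) + 1) - c i + Z ((k₀ : ℕ) + 1) ω ≤ M ω := by
      rw [hMdef]
      exact Finset.le_sup' (fun k : Fin n =>
        c ((k : ℕ) + 1) - c i + Z ((k : ℕ) + 1) ω) hk₀T
    rw [hk₀1] at hle
    have hmax := (hK' ω).2 i hi
    have hsens' := hsens (K' ω) hk'mem
    linarith
  -- measure computation
  have hs1 : MeasurableSet {p : ℝ × ℝ | p.1 ≤ p.2} := measurableSet_le measurable_fst measurable_snd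
  have hs2 : MeasurableSet {p : ℝ × ℝ | p.1 + A < p.2} :=
    measurableSet_lt (measurable_fst.add_const A) measurable_snd
  have e1 : Prb {ω | M ω ≤ Z i ω} = (μM.prod ν) {p : ℝ × ℝ | p.1 ≤ p.2} := by
    rw [← hmapprod, Measure.map_apply (hMmeas.prodMk (hZmeas i)) hs1]
    rfl
  have e2 : (μM.prod ν) {p : ℝ × ℝ | p.1 ≤ p.2} = ∫⁻ m, ν (Set.Ici m) ∂μM := by
    rw [Measure.prod_apply hs1]
    apply lintegral_congr
    intro m
    congr 1
  have e3 : Prb {ω | M ω + A < Z i ω} = (μM.prod ν) {p : ℝ × ℝ | p.1 + A < p.2} := by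
    rw [← hmapprod, Measure.map_apply (hMmeas.prodMk (hZmeas i)) hs2]
    rfl
  have e4 : (μM.prod ν) {p : ℝ × ℝ | p.1 + A < p.2} = ∫⁻ m, ν (Set.Ioi (m + A)) ∂μM := by
    rw [Measure.prod_apply hs2]
    apply lintegral_congr
    intro m
    congr 1
  calc Prb {ω | K ω = i} ≤ Prb {ω | M ω ≤ Z i ω} := measure_mono hE
    _ = ∫⁻ m, ν (Set.Ici m) ∂μM := by rw [e1, e2]
    _ ≤ ∫⁻ m, ENNReal.ofReal (Real.exp ε) * ν (Set.Ioi (m + A)) ∂μM := by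
        apply lintegral_mono
        intro m
        have := laplace_shift b A hbpos hApos.le m
        rwa [hAb] at this
    _ = ENNReal.ofReal (Real.exp ε) * ∫⁻ m, ν (Set.Ioi (m + A)) ∂μM :=
        lintegral_const_mul' _ _ (by simp)
    _ = ENNReal.ofReal (Real.exp ε) * Prb {ω | M ω + A < Z i ω} := by rw [e3, e4]
    _ ≤ ENNReal.ofReal (Real.exp ε) * Prb {ω | K' ω = i} :=
        mul_le_mul_right (measure_mono hF) _

/-- Theorem 5 of the paper: `OfflinePCPD` with `δ = 0` is
`(ε,0)`-differentially private.  Here `X, X'` are arbitrary neighboring databases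
(differing in exactly one entry among positions `1,…,n`), the noise variables
`Z_1,…,Z_n` are independent `Lap(A/ε)` random variables where
`A = sup_x log (P₁ x / P₀ x) - inf_x log (P₁ x / P₀ x)` is finite, and
`K` (resp. `K'`) selects an argmax over `k ∈ {1,…,n}` of
`ℓ(k,X) + Z_k` where `ℓ(k,X) = ∑_{j=k}^n log (P₁ (X j) / P₀ (X j))`.
Then `Pr[K = i] ≤ e^ε · Pr[K' = i]`. -/
theorem offlinePCPD_privacy
    {Ω : Type*} [MeasurableSpace Ω] (Prb : Measure Ω) [IsProbabilityMeasure Prb]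
    (P₀ P₁ : ℝ → ℝ) (hP₀ : IsDensity P₀) (hP₁ : IsDensity P₁)
    (hbddAbove : BddAbove (Set.range fun x => Real.log (P₁ x / P₀ x)))
    (hbddBelow : BddBelow (Set.range fun x => Real.log (P₁ x / P₀ x)))
    (A : ℝ)
    (hA : A = sSup (Set.range fun x => Real.log (P₁ x / P₀ x))
            - sInf (Set.range fun x => Real.log (P₁ x / P₀ x)))
    (ε : ℝ) (hε : 0 < ε)
    (n : ℕ) (hn : 1 ≤ n)
    (X X' : ℕ → ℝ)
    (hneighbor : ∃ j ∈ Finset.Icc 1 n, X j ≠ X' j ∧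
        ∀ m ∈ Finset.Icc 1 n, m ≠ j → X m = X' m)
    (Z : ℕ → Ω → ℝ) (hZmeas : ∀ k, Measurable (Z k))
    (hZindep : iIndepFun
        (fun k : Fin n => Z ((k : ℕ) + 1)) Prb)
    (hZlaw : ∀ k ∈ Finset.Icc 1 n, Measure.map (Z k) Prb = laplaceMeasure (A / ε))
    (K K' : Ω → ℕ)
    (hK : ∀ ω, K ω ∈ Finset.Icc 1 n ∧ ∀ k ∈ Finset.Icc 1 n,
        (∑ m ∈ Finset.Icc k n, Real.log (P₁ (X m) / P₀ (X m))) + Z k ω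
          ≤ (∑ m ∈ Finset.Icc (K ω) n, Real.log (P₁ (X m) / P₀ (X m))) + Z (K ω) ω)
    (hK' : ∀ ω, K' ω ∈ Finset.Icc 1 n ∧ ∀ k ∈ Finset.Icc 1 n,
        (∑ m ∈ Finset.Icc k n, Real.log (P₁ (X' m) / P₀ (X' m))) + Z k ω
          ≤ (∑ m ∈ Finset.Icc (K' ω) n, Real.log (P₁ (X' m) / P₀ (X' m))) + Z (K' ω) ω)
    (i : ℕ) (hi : i ∈ Finset.Icc 1 n) :
    Prb {ω | K ω = i} ≤ ENNReal.ofReal (Real.exp ε) * Prb {ω | K' ω = i} := by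
  obtain ⟨j, hj, hXj, hsame⟩ := hneighbor
  obtain ⟨hj1, hj2⟩ := Finset.mem_Icc.mp hj
  obtain ⟨hi1, hi2⟩ := Finset.mem_Icc.mp hi
  set L : ℝ → ℝ := fun x => Real.log (P₁ x / P₀ x) with hL
  -- A is positive (otherwise the Laplace measure is the zero measure, contradiction)
  have hApos : 0 < A := by
    by_contra h
    push_neg at h
    have hb : A / ε ≤ 0 := div_nonpos_of_nonpos_of_nonneg h hε.le
    have hzero : laplaceMeasure (A / ε) = 0 := by
      have hfn : (fun x : ℝ => ENNReal.ofReal (Real.exp (-|x| / (A / ε)) / (2 * (A / ε))))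
          = fun _ => 0 := by
        funext x
        rw [ENNReal.ofReal_eq_zero]
        rcases lt_or_eq_of_le hb with hb' | hb'
        · exact div_nonpos_of_nonneg_of_nonpos (Real.exp_nonneg _) (by linarith)
        · rw [hb']
          simp
      show volume.withDensity _ = 0
      rw [hfn]
      exact withDensity_zero
    have hZuniv : Measure.map (Z i) Prb Set.univ = 1 := by
      rw [Measure.map_apply (hZmeas i) MeasurableSet.univ]
      simp
    rw [hZlaw i hi, hzero] at hZuniv
    simp at hZuniv
  -- bound on the single-entry difference
  set d : ℝ := L (X j) - L (X' j) with hd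
  have hdA : |d| ≤ A := by
    have h1 : L (X j) ≤ sSup (Set.range L) := le_csSup hbddAbove ⟨X j, rfl⟩
    have h2 : sInf (Set.range L) ≤ L (X' j) := csInf_le hbddBelow ⟨X' j, rfl⟩
    have h3 : L (X' j) ≤ sSup (Set.range L) := le_csSup hbddAbove ⟨X' j, rfl⟩
    have h4 : sInf (Set.range L) ≤ L (X j) := csInf_le hbddBelow ⟨X j, rfl⟩
    rw [abs_le]
    constructor <;> [skip; skip] <;> rw [hd, hA] <;> linarith
  -- partial sums and sensitivity
  have hcm : ∀ m ∈ Finset.Icc 1 n,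
      (∑ t ∈ Finset.Icc m n, L (X t)) - (∑ t ∈ Finset.Icc m n, L (X' t))
        = if m ≤ j then d else 0 := by
    intro m hm
    obtain ⟨hm1, hm2⟩ := Finset.mem_Icc.mp hm
    rw [← Finset.sum_sub_distrib]
    by_cases hmj : m ≤ j
    · rw [if_pos hmj]
      apply Finset.sum_eq_single_of_mem j (Finset.mem_Icc.mpr ⟨hmj, hj2⟩)
      intro t ht htj
      obtain ⟨ht1, ht2⟩ := Finset.mem_Icc.mp ht
      rw [hsame t (Finset.mem_Icc.mpr ⟨le_trans hm1 ht1, ht2⟩) htj, sub_self]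
    · rw [if_neg hmj]
      apply Finset.sum_eq_zero
      intro t ht
      obtain ⟨ht1, ht2⟩ := Finset.mem_Icc.mp ht
      have htj : t ≠ j := by omega
      rw [hsame t (Finset.mem_Icc.mpr ⟨le_trans hm1 ht1, ht2⟩) htj, sub_self]
  have hsens : ∀ k ∈ Finset.Icc 1 n,
      (∑ t ∈ Finset.Icc k n, L (X' t)) - (∑ t ∈ Finset.Icc i n, L (X' t))
        ≤ (∑ t ∈ Finset.Icc k n, L (X t)) - (∑ t ∈ Finset.Icc i n, L (X t)) + A := by
    intro k hk
    have h1 := hcm k hk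
    have h2 := hcm i hi
    have hd1 : d ≤ A := (abs_le.mp hdA).2
    have hd2 : -A ≤ d := (abs_le.mp hdA).1
    split_ifs at h1 h2 <;> linarith
  exact pcpd_core Prb A ε hApos hε n hn
    (fun k => ∑ t ∈ Finset.Icc k n, L (X t))
    (fun k => ∑ t ∈ Finset.Icc k n, L (X' t))
    i hi hsens Z hZmeas hZindep (hZlaw i hi) K K' hK hK'
end

section
/- Let P_0, P_1 be probability densities with A = sup_x log(P_1(x)/P_0(x)) − inf_{x'} log(P_1(x')/P_0(x')) finite, and let C = min{D_KL(P_1||P_0), D_KL(P_0||P_1)}. Let X = (x_1,…,x_n) be independent with x_i ~ P_0 for i < k* and x_i ~ P_1 for i ≥ k*, where k* ∈ (1,n]. Let k̂ = argmax_{1≤k≤n} ℓ(k,X) be the maximum likelihood estimator of the change point, where ℓ(k,X) = Σ_{i=k}^n log(P_1(x_i)/P_0(x_i)). Then for every β > 0, with α = (2A²/C²)·log(32/(3β)), we have Pr[|k̂ − k*| < α] ≥ 1 − β. -/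
open MeasureTheory ProbabilityTheory

/-- The Kullback–Leibler divergence `D_KL(P‖Q) = E_{x~P}[log (P x / Q x)]`
for densities `P, Q` on `ℝ`. -/
noncomputable def klDivR (P Q : ℝ → ℝ) : ℝ :=
  ∫ x, P x * Real.log (P x / Q x)

open scoped ENNReal NNReal


lemma integrable_of_bdd {Ω : Type*} [MeasurableSpace Ω] {μ : Measure Ω} [IsFiniteMeasure μ]
    {f : Ω → ℝ} (hf : AEStronglyMeasurable f μ) {K : ℝ} (h : ∀ ω, |f ω| ≤ K) :
    Integrable f μ :=
  Integrable.mono' (integrable_const K) hf (ae_of_all _ h)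

/-- Hoeffding-lite mgf bound: for `W` with values in `[lo,hi]`, mean `≤ -C < 0`,
with `R = hi - lo > 0` and `λ = C/R²`, we get `∫ exp(λW) ≤ exp(-C²/(2R²))`. -/
lemma mgf_bound_of_mean_le {ν : Measure ℝ} [IsProbabilityMeasure ν]
    {W : ℝ → ℝ} (hW : Measurable W) {lo hi C : ℝ}
    (hbd : ∀ y, W y ∈ Set.Icc lo hi) (hC : 0 < C) (hR : 0 < hi - lo)
    (hmean : ∫ y, W y ∂ν ≤ -C) :
    ∫ y, Real.exp (C / (hi - lo) ^ 2 * W y) ∂ν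
      ≤ Real.exp (-C ^ 2 / (2 * (hi - lo) ^ 2)) := by
  set R : ℝ := hi - lo with hRdef
  set l : ℝ := C / R ^ 2 with hl
  have hlpos : 0 < l := div_pos hC (by positivity)
  -- integrability of W
  have hWint : Integrable W ν := by
    refine integrable_of_bdd hW.aestronglyMeasurable (K := |lo| + |hi|) fun ω => ?_
    rcases hbd ω with ⟨h1, h2⟩
    rw [abs_le]
    constructor <;> nlinarith [abs_nonneg lo, abs_nonneg hi, le_abs_self hi, neg_abs_le lo, le_abs_self lo, neg_abs_le hi]
  set m : ℝ := ∫ y, W y ∂ν with hm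
  have hmlo : lo ≤ m := by
    have := integral_mono (integrable_const lo) hWint (fun y => (hbd y).1)
    simpa using this
  have hmhi : m ≤ hi := by
    have := integral_mono hWint (integrable_const hi) (fun y => (hbd y).2)
    simpa using this
  -- pointwise chord bound
  have hpt : ∀ y, Real.exp (l * W y)
      ≤ Real.exp (l * m) * (Real.cosh (l * R) + ((W y - m) / R) * Real.sinh (l * R)) := by
    intro y
    have h1 : Real.exp (l * W y) = Real.exp (l * m) * Real.exp ((W y - m) / R * (l * R)) := by
      rw [← Real.exp_add]; congr 1; field_simp; ring
    rw [h1]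
    have habs : |(W y - m) / R| ≤ 1 := by
      rw [abs_div, abs_of_pos hR, div_le_one hR]
      rcases hbd y with ⟨h1', h2'⟩
      rw [abs_le]; constructor <;> simp only [hRdef] <;> linarith
    have := Real.exp_mul_le_cosh_add_mul_sinh habs (l * R)
    have hexp := Real.exp_pos (l * m)
    nlinarith [this, hexp.le]
  -- integrate
  have hint_rhs : Integrable (fun y => Real.exp (l * m) * (Real.cosh (l * R) + ((W y - m) / R) * Real.sinh (l * R))) ν := by
    apply Integrable.const_mul
    exact (integrable_const _).add (((hWint.sub (integrable_const m)).div_const R).mul_const _)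
  have hint_lhs : Integrable (fun y => Real.exp (l * W y)) ν := by
    refine integrable_of_bdd ((hW.const_mul l).exp.aestronglyMeasurable) (K := Real.exp (l * hi)) fun y => ?_
    rw [abs_of_pos (Real.exp_pos _)]
    exact Real.exp_le_exp.2 (by nlinarith [(hbd y).2])
  have key : ∫ y, Real.exp (l * W y) ∂ν ≤ Real.exp (l * m) * Real.cosh (l * R) := by
    calc ∫ y, Real.exp (l * W y) ∂ν
        ≤ ∫ y, Real.exp (l * m) * (Real.cosh (l * R) + ((W y - m) / R) * Real.sinh (l * R)) ∂ν :=
          integral_mono hint_lhs hint_rhs hpt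
      _ = Real.exp (l * m) * Real.cosh (l * R) := by
          rw [integral_const_mul]
          congr 1
          have hf : Integrable (fun y => (W y - m) / R * Real.sinh (l * R)) ν := by
            have := (Integrable.mul_const (Integrable.div_const (hWint.sub (integrable_const m)) R)
              (Real.sinh (l * R)))
            exact this.congr (ae_of_all _ fun y => rfl)
          rw [integral_add (integrable_const _) hf, integral_mul_const, integral_div,
            integral_sub hWint (integrable_const m)]
          simp [← hm]
  calc ∫ y, Real.exp (l * W y) ∂ν ≤ Real.exp (l * m) * Real.cosh (l * R) := key
    _ ≤ Real.exp (l * m) * Real.exp ((l * R) ^ 2 / 2) := by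
        exact mul_le_mul_of_nonneg_left (Real.cosh_le_exp_half_sq _) (Real.exp_pos _).le
    _ = Real.exp (l * m + (l * R) ^ 2 / 2) := (Real.exp_add _ _).symm
    _ ≤ Real.exp (-C ^ 2 / (2 * R ^ 2)) := by
        apply Real.exp_le_exp.2
        have h1 : l * m ≤ l * (-C) := mul_le_mul_of_nonneg_left hmean hlpos.le
        have h2 : (l * R) ^ 2 / 2 = C ^ 2 / (2 * R ^ 2) := by
          rw [hl]; field_simp
        have h3 : l * (-C) = -(C ^ 2 / R ^ 2) := by rw [hl]; field_simp
        rw [h2]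
        have : -C ^ 2 / (2 * R ^ 2) = -(C ^ 2 / R ^ 2) + C ^ 2 / (2 * R ^ 2) := by
          field_simp; ring
        rw [this]; linarith





lemma IsDensity.integrable {P : ℝ → ℝ} (hP : IsDensity P) : Integrable P volume := by
  by_contra h
  have h2 := hP.integral_one
  rw [integral_undef h] at h2
  exact one_ne_zero h2.symm

lemma isProbabilityMeasure_densityMeasure {P : ℝ → ℝ} (hP : IsDensity P) :
    IsProbabilityMeasure (densityMeasure P) := by
  constructor
  rw [densityMeasure, withDensity_apply _ MeasurableSet.univ, setLIntegral_univ]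
  rw [← ofReal_integral_eq_lintegral_ofReal hP.integrable (ae_of_all _ hP.nonneg),
    hP.integral_one, ENNReal.ofReal_one]

lemma integral_densityMeasure {P : ℝ → ℝ} (hP : IsDensity P) (g : ℝ → ℝ) :
    ∫ y, g y ∂(densityMeasure P) = ∫ y, P y * g y := by
  have h1 : densityMeasure P = volume.withDensity fun y => ((P y).toNNReal : ℝ≥0∞) := rfl
  rw [h1, integral_withDensity_eq_integral_smul (hP.measurable.real_toNNReal) g]
  congr 1; funext y
  simp [NNReal.smul_def, Real.coe_toNNReal _ (hP.nonneg y)]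


lemma integrable_of_bdd' {Ω : Type*} [MeasurableSpace Ω] {μ : Measure Ω} [IsFiniteMeasure μ]
    {f : Ω → ℝ} (hf : AEStronglyMeasurable f μ) {K : ℝ} (h : ∀ ω, |f ω| ≤ K) :
    Integrable f μ :=
  Integrable.mono' (integrable_const K) hf (ae_of_all _ h)

lemma first_passage_bound {Ω : Type*} [MeasurableSpace Ω] {μ : Measure Ω}
    [IsProbabilityMeasure μ]
    {n : ℕ} {Z : Fin n → Ω → ℝ} (hZmeas : ∀ i, Measurable (Z i))
    (hindep : iIndepFun Z μ)
    {lo hi l ρ : ℝ} (hl : 0 ≤ l)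
    (hbd : ∀ i ω, Z i ω ∈ Set.Icc lo hi)
    (M : Finset ℕ) (s : ℕ → Finset (Fin n))
    (hmono : ∀ m ∈ M, ∀ m' ∈ M, m ≤ m' → s m ⊆ s m')
    (hmgf : ∀ m ∈ M, ∀ i ∈ s m, ∫ ω, Real.exp (l * Z i ω) ∂μ ≤ ρ)
    (q : ℝ) (hq0 : 0 ≤ q) (hq : ∀ m ∈ M, ρ ^ (s m).card ≤ q) :
    μ (⋃ m ∈ M, {ω | 0 ≤ ∑ i ∈ s m, Z i ω}) ≤ ENNReal.ofReal q := by
  classical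
  rcases M.eq_empty_or_nonempty with hM | hMne
  · simp [hM]
  set mx := M.max' hMne with hmx
  have hmxM : mx ∈ M := M.max'_mem hMne
  set full : Finset (Fin n) := s mx with hfull
  -- the per-variable mgf values
  set r : Fin n → ℝ := fun i => ∫ ω, Real.exp (l * Z i ω) ∂μ with hr
  have hZint : ∀ (t : Finset (Fin n)) (g : Fin n → Ω → ℝ), True := fun _ _ => trivial
  -- bounds for sums
  set c : ℝ := |lo| ⊔ |hi| with hc
  have hcn : 0 ≤ c := le_trans (abs_nonneg lo) le_sup_left
  have hsum_bd : ∀ (t : Finset (Fin n)) ω, |∑ i ∈ t, Z i ω| ≤ (n : ℝ) * c := by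
    intro t ω
    calc |∑ i ∈ t, Z i ω| ≤ ∑ i ∈ t, |Z i ω| := Finset.abs_sum_le_sum_abs _ _
      _ ≤ ∑ _i ∈ t, c := by
          refine Finset.sum_le_sum fun i _ => ?_
          rcases hbd i ω with ⟨h1, h2⟩
          rw [abs_le]
          constructor
          · calc -c ≤ -|lo| := by simp [hc]
              _ ≤ lo := neg_abs_le lo
              _ ≤ Z i ω := h1
          · exact h2.trans ((le_abs_self hi).trans le_sup_right)
      _ = t.card * c := by rw [Finset.sum_const, nsmul_eq_mul]
      _ ≤ (n : ℝ) * c := by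
          apply mul_le_mul_of_nonneg_right _ hcn
          exact_mod_cast Finset.card_le_card (Finset.subset_univ t) |>.trans (by simp)
  set K : ℝ := Real.exp (l * ((n : ℝ) * c)) with hK
  have hexp_bd : ∀ (t : Finset (Fin n)) ω, Real.exp (l * ∑ i ∈ t, Z i ω) ≤ K := by
    intro t ω
    apply Real.exp_le_exp.2
    apply mul_le_mul_of_nonneg_left _ hl
    exact (le_abs_self _).trans (hsum_bd t ω)
  -- integrability of exp of sums
  have hSmeas : ∀ t : Finset (Fin n), Measurable fun ω => ∑ i ∈ t, Z i ω :=
    fun t => Finset.measurable_sum t fun i _ => hZmeas i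
  have hSint : ∀ t : Finset (Fin n), Integrable (fun ω => Real.exp (l * ∑ i ∈ t, Z i ω)) μ := by
    intro t
    refine integrable_of_bdd' (((hSmeas t).const_mul l).exp.aestronglyMeasurable) (K := K) ?_
    intro ω
    rw [abs_of_pos (Real.exp_pos _)]
    exact hexp_bd t ω
  -- r i positive
  have hrpos : ∀ i, 0 < r i := by
    intro i
    have h1 : Integrable (fun ω => Real.exp (l * Z i ω)) μ := by
      refine integrable_of_bdd' (((hZmeas i).const_mul l).exp.aestronglyMeasurable)
        (K := Real.exp (l * hi)) ?_
      intro ω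
      rw [abs_of_pos (Real.exp_pos _)]
      exact Real.exp_le_exp.2 (mul_le_mul_of_nonneg_left (hbd i ω).2 hl)
    have h2 : Real.exp (l * lo) ≤ r i := by
      rw [hr]
      calc Real.exp (l * lo) = ∫ _ω, Real.exp (l * lo) ∂μ := by simp
        _ ≤ _ := integral_mono (integrable_const _) h1
            (fun ω => Real.exp_le_exp.2 (mul_le_mul_of_nonneg_left (hbd i ω).1 hl))
    exact lt_of_lt_of_le (Real.exp_pos _) h2
  -- mgf of sums
  have hmgf_sum : ∀ t : Finset (Fin n),
      ∫ ω, Real.exp (l * ∑ i ∈ t, Z i ω) ∂μ = ∏ i ∈ t, r i := by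
    intro t
    have := hindep.mgf_sum hZmeas t (t := l)
    simp only [mgf, Finset.sum_apply] at this
    exact this
  -- the first-passage events
  set B : ℕ → Set Ω := fun m => {ω | 0 ≤ ∑ i ∈ s m, Z i ω} with hB
  set E : ℕ → Set Ω := fun m =>
    {ω | 0 ≤ ∑ i ∈ s m, Z i ω ∧ ∀ m' ∈ M, m' < m → ¬ 0 ≤ ∑ i ∈ s m', Z i ω} with hE
  have hBmeas : ∀ m, MeasurableSet (B m) :=
    fun m => measurableSet_le measurable_const (hSmeas (s m))
  have hEmeas : ∀ m, MeasurableSet (E m) := by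
    intro m
    have : E m = B m ∩ ⋂ m' ∈ M, ⋂ (_ : m' < m), (B m')ᶜ := by
      ext ω
      simp only [hE, hB, Set.mem_inter_iff, Set.mem_iInter, Set.mem_compl_iff,
        Set.mem_setOf_eq]
    rw [this]
    exact (hBmeas m).inter (MeasurableSet.biInter (Set.to_countable _)
      fun m' _ => MeasurableSet.iInter fun _ => (hBmeas m').compl)
  have hEsubB : ∀ m, E m ⊆ B m := fun m ω hω => hω.1
  -- union inclusion
  have hUnion : (⋃ m ∈ M, B m) ⊆ ⋃ m ∈ M, E m := by
    intro ω hω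
    simp only [Set.mem_iUnion] at hω ⊢
    obtain ⟨m₁, hm₁M, hm₁⟩ := hω
    set Mω := M.filter (fun m => 0 ≤ ∑ i ∈ s m, Z i ω) with hMω
    have hMωne : Mω.Nonempty := ⟨m₁, Finset.mem_filter.2 ⟨hm₁M, hm₁⟩⟩
    refine ⟨Mω.min' hMωne, (Finset.mem_filter.1 (Mω.min'_mem hMωne)).1, ?_, ?_⟩
    · exact (Finset.mem_filter.1 (Mω.min'_mem hMωne)).2
    · intro m' hm'M hlt hcon
      exact absurd (Mω.min'_le m' (Finset.mem_filter.2 ⟨hm'M, hcon⟩)) (not_le.2 hlt)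
  -- pairwise disjoint
  have hdisj : (↑M : Set ℕ).PairwiseDisjoint E := by
    intro a ha b hb hab
    simp only [Function.onFun]
    rw [Set.disjoint_left]
    intro ω hωa hωb
    rcases lt_or_gt_of_ne hab with h | h
    · exact hωb.2 a (by exact_mod_cast ha) h hωa.1
    · exact hωa.2 b (by exact_mod_cast hb) h hωb.1
  -- subsets
  have hsub : ∀ m ∈ M, s m ⊆ full := fun m hm => hmono m hm mx hmxM (M.le_max' m hm)
  -- the key per-m independence estimate
  have hkey : ∀ m ∈ M, (μ (E m)).toReal * ∏ i ∈ full \ s m, r i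
      ≤ ∫ ω, Set.indicator (E m) (fun ω' => Real.exp (l * ∑ i ∈ full, Z i ω')) ω ∂μ := by
    intro m hm
    set t₁ : Finset (Fin n) := s m with ht₁
    set t₂ : Finset (Fin n) := full \ t₁ with ht₂
    have ht₁sub : t₁ ⊆ full := hsub m hm
    have htdisj : Disjoint t₁ t₂ := Finset.disjoint_sdiff
    have htunion : t₁ ∪ t₂ = full := Finset.union_sdiff_of_subset ht₁sub
    set W₁ : Ω → ({i // i ∈ t₁} → ℝ) := fun a (i : t₁) => Z i a with hW₁def
    set W₂ : Ω → ({i // i ∈ t₂} → ℝ) := fun a (i : t₂) => Z i a with hW₂def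
    have hW₁meas : Measurable W₁ := measurable_pi_lambda _ fun i => hZmeas i
    have hW₂meas : Measurable W₂ := measurable_pi_lambda _ fun i => hZmeas i
    set Aset : Set ({i // i ∈ t₁} → ℝ) :=
      {v | 0 ≤ ∑ i ∈ t₁.attach, v i ∧ ∀ m' (hm' : m' ∈ M) (hlt : m' < m),
        ¬ 0 ≤ ∑ i ∈ (s m').attach, v ⟨↑i, hmono m' hm' m hm hlt.le i.2⟩} with hAset
    have hsum_meas : ∀ (u : Finset (Fin n)) (g : {i // i ∈ u} → {i // i ∈ t₁}),
        Measurable (fun v : {i // i ∈ t₁} → ℝ => ∑ i ∈ u.attach, v (g i)) :=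
      fun u g => Finset.measurable_sum _ fun i _ => by exact measurable_pi_apply _
    have hAmeas : MeasurableSet Aset := by
      have : Aset = {v | 0 ≤ ∑ i ∈ t₁.attach, v i} ∩
          ⋂ (m' : ℕ), ⋂ (hm' : m' ∈ M), ⋂ (hlt : m' < m),
            {v : {i // i ∈ t₁} → ℝ |
              0 ≤ ∑ i ∈ (s m').attach, v ⟨↑i, hmono m' hm' m hm hlt.le i.2⟩}ᶜ := by
        ext v
        simp only [hAset, Set.mem_inter_iff, Set.mem_iInter, Set.mem_compl_iff,
          Set.mem_setOf_eq]
      rw [this]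
      refine MeasurableSet.inter ?_ ?_
      · exact measurableSet_le measurable_const
          (Finset.measurable_sum _ fun i _ => by exact measurable_pi_apply _)
      · refine MeasurableSet.iInter fun m' => MeasurableSet.iInter fun hm' =>
          MeasurableSet.iInter fun hlt => MeasurableSet.compl ?_
        exact measurableSet_le measurable_const
          (Finset.measurable_sum _ fun i _ => by exact measurable_pi_apply _)
    set F : ({i // i ∈ t₁} → ℝ) → ℝ :=
      Set.indicator Aset (fun v => Real.exp (l * ∑ i ∈ t₁.attach, v i)) with hFdef
    set G : ({i // i ∈ t₂} → ℝ) → ℝ :=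
      fun v => Real.exp (l * ∑ i ∈ t₂.attach, v i) with hGdef
    have hFmeas : Measurable F := by
      refine Measurable.indicator ?_ hAmeas
      exact ((Finset.measurable_sum _ fun i _ => by exact measurable_pi_apply _).const_mul
        l).exp
    have hGmeas : Measurable G := by
      exact ((Finset.measurable_sum _ fun i _ => by exact measurable_pi_apply _).const_mul
        l).exp
    have hIndep : IndepFun (F ∘ W₁) (G ∘ W₂) μ :=
      IndepFun.comp (hindep.indepFun_finset t₁ t₂ htdisj hZmeas) hFmeas hGmeas
    -- identify the composites
    have hU_eq : F ∘ W₁ = Set.indicator (E m)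
        (fun ω' => Real.exp (l * ∑ i ∈ t₁, Z i ω')) := by
      funext ω
      have hmem : (W₁ ω ∈ Aset) ↔ (ω ∈ E m) := by
        simp only [hAset, Set.mem_setOf_eq, hE, hW₁def]
        constructor
        · rintro ⟨h1, h2⟩
          refine ⟨by rwa [Finset.sum_attach t₁ (fun j => Z j ω)] at h1, ?_⟩
          intro m' hm' hlt
          have := h2 m' hm' hlt
          rwa [Finset.sum_attach (s m') (fun j => Z j ω)] at this
        · rintro ⟨h1, h2⟩
          refine ⟨by rwa [Finset.sum_attach t₁ (fun j => Z j ω)], ?_⟩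
          intro m' hm' hlt
          have := h2 m' hm' hlt
          rwa [← Finset.sum_attach (s m') (fun j => Z j ω)] at this
      simp only [Function.comp_apply, hFdef]
      rw [Set.indicator_apply, Set.indicator_apply]
      by_cases hω : ω ∈ E m
      · rw [if_pos (hmem.2 hω), if_pos hω, Finset.sum_attach t₁ (fun j => Z j ω)]
      · rw [if_neg (fun hc => hω (hmem.1 hc)), if_neg hω]
    have hV_eq : G ∘ W₂ = fun ω => Real.exp (l * ∑ i ∈ t₂, Z i ω) := by
      funext ω
      simp only [Function.comp_apply, hGdef, hW₂def]
      rw [Finset.sum_attach t₂ (fun j => Z j ω)]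
    have hUint : Integrable (F ∘ W₁) μ := by
      rw [hU_eq]
      exact (hSint t₁).indicator (hEmeas m)
    have hVint : Integrable (G ∘ W₂) μ := by
      rw [hV_eq]; exact hSint t₂
    have hmul := hIndep.integral_mul_eq_mul_integral hUint.1 hVint.1
    -- pointwise identity
    have hpoint : ∀ ω, Set.indicator (E m)
        (fun ω' => Real.exp (l * ∑ i ∈ full, Z i ω')) ω = (F ∘ W₁) ω * (G ∘ W₂) ω := by
      intro ω
      rw [hU_eq, hV_eq]
      rw [Set.indicator_apply, Set.indicator_apply]
      by_cases hω : ω ∈ E m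
      · rw [if_pos hω, if_pos hω, ← Real.exp_add, ← mul_add]
        congr 2
        rw [← htunion, Finset.sum_union htdisj]
      · rw [if_neg hω, if_neg hω, zero_mul]
    have step1 : ∫ ω, Set.indicator (E m)
        (fun ω' => Real.exp (l * ∑ i ∈ full, Z i ω')) ω ∂μ
        = (∫ ω, (F ∘ W₁) ω ∂μ) * ∫ ω, (G ∘ W₂) ω ∂μ := by
      rw [← hmul]
      exact integral_congr_ae (ae_of_all _ hpoint)
    have step2 : ∫ ω, (G ∘ W₂) ω ∂μ = ∏ i ∈ t₂, r i := by
      rw [hV_eq]; exact hmgf_sum t₂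
    have step3 : (μ (E m)).toReal ≤ ∫ ω, (F ∘ W₁) ω ∂μ := by
      rw [hU_eq]
      have h1 : ∫ ω, Set.indicator (E m) (fun _ => (1:ℝ)) ω ∂μ = (μ (E m)).toReal := by
        rw [integral_indicator (hEmeas m)]
        simp [measureReal_def]
      rw [← h1]
      refine integral_mono ((integrable_const (1:ℝ)).indicator (hEmeas m))
        ((hSint t₁).indicator (hEmeas m)) fun ω => ?_
      rw [Set.indicator_apply, Set.indicator_apply]
      by_cases hω : ω ∈ E m
      · rw [if_pos hω, if_pos hω]
        exact Real.one_le_exp (mul_nonneg hl hω.1)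
      · rw [if_neg hω, if_neg hω]
    rw [step1, step2]
    apply mul_le_mul_of_nonneg_right step3
    exact Finset.prod_nonneg fun i _ => (hrpos i).le
  -- sum up
  set p : ℕ → ℝ := fun m => (μ (E m)).toReal with hp
  have hppos : ∀ m, 0 ≤ p m := fun m => ENNReal.toReal_nonneg
  set Pfull : ℝ := ∏ i ∈ full, r i with hPfull
  have hPfullpos : 0 < Pfull := Finset.prod_pos fun i _ => hrpos i
  have hsum_le : ∑ m ∈ M, p m * ∏ i ∈ full \ s m, r i ≤ Pfull := by
    have h1 : ∑ m ∈ M, p m * ∏ i ∈ full \ s m, r i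
        ≤ ∑ m ∈ M, ∫ ω, Set.indicator (E m)
            (fun ω' => Real.exp (l * ∑ i ∈ full, Z i ω')) ω ∂μ :=
      Finset.sum_le_sum fun m hm => hkey m hm
    have h2 : ∑ m ∈ M, ∫ ω, Set.indicator (E m)
          (fun ω' => Real.exp (l * ∑ i ∈ full, Z i ω')) ω ∂μ
        ≤ ∫ ω, Real.exp (l * ∑ i ∈ full, Z i ω) ∂μ := by
      rw [← integral_finset_sum M (fun m _ => (hSint full).indicator (hEmeas m))]
      refine integral_mono (integrable_finset_sum M
        (fun m _ => (hSint full).indicator (hEmeas m))) (hSint full) fun ω => ?_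
      by_cases hex : ∃ m₀ ∈ M, ω ∈ E m₀
      · obtain ⟨m₀, hm₀M, hωm₀⟩ := hex
        rw [Finset.sum_eq_single_of_mem m₀ hm₀M ?_]
        · rw [Set.indicator_of_mem hωm₀]
        · intro b hb hne
          rw [Set.indicator_of_notMem]
          intro hωb
          exact Set.disjoint_left.1 (hdisj (by exact_mod_cast hb)
            (by exact_mod_cast hm₀M) hne) hωb hωm₀
      · push_neg at hex
        rw [Finset.sum_eq_zero fun m hmM => Set.indicator_of_notMem (hex m hmM) _]
        exact (Real.exp_pos _).le
    calc ∑ m ∈ M, p m * ∏ i ∈ full \ s m, r i ≤ _ := h1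
      _ ≤ ∫ ω, Real.exp (l * ∑ i ∈ full, Z i ω) ∂μ := h2
      _ = Pfull := hmgf_sum full
  -- conclude ∑ p m ≤ q
  have hfinal : ∑ m ∈ M, p m ≤ q := by
    have hprod_split : ∀ m ∈ M, (∏ i ∈ s m, r i) * ∏ i ∈ full \ s m, r i = Pfull := by
      intro m hm
      rw [← Finset.prod_union Finset.disjoint_sdiff,
        Finset.union_sdiff_of_subset (hsub m hm)]
    have hterm : ∀ m ∈ M, p m * Pfull ≤ (p m * ∏ i ∈ full \ s m, r i) * q := by
      intro m hm
      rw [← hprod_split m hm]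
      have h1 : ∏ i ∈ s m, r i ≤ q := by
        calc ∏ i ∈ s m, r i ≤ ∏ _i ∈ s m, ρ :=
              Finset.prod_le_prod (fun i _ => (hrpos i).le) (fun i hi => hmgf m hm i hi)
          _ = ρ ^ (s m).card := by rw [Finset.prod_const]
          _ ≤ q := hq m hm
      calc p m * ((∏ i ∈ s m, r i) * ∏ i ∈ full \ s m, r i)
          = (p m * ∏ i ∈ full \ s m, r i) * ∏ i ∈ s m, r i := by ring
        _ ≤ (p m * ∏ i ∈ full \ s m, r i) * q := by
            apply mul_le_mul_of_nonneg_left h1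
            exact mul_nonneg (hppos m) (Finset.prod_nonneg fun i _ => (hrpos i).le)
    have h3 : (∑ m ∈ M, p m) * Pfull ≤ q * Pfull := by
      calc (∑ m ∈ M, p m) * Pfull = ∑ m ∈ M, p m * Pfull := by rw [Finset.sum_mul]
        _ ≤ ∑ m ∈ M, (p m * ∏ i ∈ full \ s m, r i) * q := Finset.sum_le_sum hterm
        _ = (∑ m ∈ M, p m * ∏ i ∈ full \ s m, r i) * q := by rw [Finset.sum_mul]
        _ ≤ Pfull * q := mul_le_mul_of_nonneg_right hsum_le hq0
        _ = q * Pfull := mul_comm _ _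
    exact le_of_mul_le_mul_right h3 hPfullpos
  -- put everything together
  calc μ (⋃ m ∈ M, {ω | 0 ≤ ∑ i ∈ s m, Z i ω}) ≤ μ (⋃ m ∈ M, E m) := measure_mono hUnion
    _ = ∑ m ∈ M, μ (E m) := measure_biUnion_finset hdisj fun m _ => hEmeas m
    _ = ∑ m ∈ M, ENNReal.ofReal (p m) := by
        refine Finset.sum_congr rfl fun m _ => ?_
        rw [hp, ENNReal.ofReal_toReal (measure_ne_top μ _)]
    _ = ENNReal.ofReal (∑ m ∈ M, p m) :=
        (ENNReal.ofReal_sum_of_nonneg fun m _ => hppos m).symm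
    _ ≤ ENNReal.ofReal q := ENNReal.ofReal_le_ofReal hfinal


lemma sum_attachFin_eq {n : ℕ} (s : Finset ℕ) (h : ∀ m ∈ s, m < n) (f : ℕ → ℝ) :
    ∑ i ∈ s.attachFin h, f ((i : ℕ) + 1) = ∑ j ∈ s, f (j + 1) := by
  refine Finset.sum_bij (fun (i : Fin n) _ => (i : ℕ)) ?_ ?_ ?_ ?_
  · intro a ha; exact (Finset.mem_attachFin h).1 ha
  · intro a _ b _ hab; exact Fin.val_injective hab
  · intro b hb; exact ⟨⟨b, h b hb⟩, (Finset.mem_attachFin h).2 hb, rfl⟩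
  · intro a _; rfl

lemma sum_Ico_shift (a b : ℕ) (f : ℕ → ℝ) :
    ∑ j ∈ Finset.Ico a b, f (j + 1) = ∑ j ∈ Finset.Icc (a + 1) b, f j := by
  rw [← Finset.Ico_add_one_right_eq_Icc, ← Finset.map_add_right_Ico a b 1, Finset.sum_map]
  rfl

lemma sum_Icc_split (f : ℕ → ℝ) (a b c : ℕ) (h1 : a ≤ b) (h2 : b ≤ c + 1) :
    ∑ j ∈ Finset.Icc a c, f j
      = (∑ j ∈ Finset.Ico a b, f j) + ∑ j ∈ Finset.Icc b c, f j := by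
  rw [← Finset.Ico_add_one_right_eq_Icc, ← Finset.Ico_add_one_right_eq_Icc,
    ← Finset.sum_Ico_consecutive f (le_trans h1 (by omega)) h2]





/-- non-private part of Theorem 4: in the offline change-point model
with data `x_1,…,x_n` independent, `x_i ~ P₀` for `i < k*` and `x_i ~ P₁` for `i ≥ k*`,
`k* ∈ (1,n]`, if `A = sup_x log (P₁ x / P₀ x) - inf_x log (P₁ x / P₀ x)` is finite and
`C = min{D_KL(P₁‖P₀), D_KL(P₀‖P₁)}`, then the MLE
`k̂ = argmax_{1 ≤ k ≤ n} ℓ(k,X)` satisfies `Pr[|k̂ - k*| < α] ≥ 1 - β` for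
`α = (2A²/C²)·log (32/(3β))`. -/
theorem mle_accuracy_bounded
    {Ω : Type*} [MeasurableSpace Ω] (Prb : Measure Ω) [IsProbabilityMeasure Prb]
    (P₀ P₁ : ℝ → ℝ) (hP₀ : IsDensity P₀) (hP₁ : IsDensity P₁)
    (hbddAbove : BddAbove (Set.range fun x => Real.log (P₁ x / P₀ x)))
    (hbddBelow : BddBelow (Set.range fun x => Real.log (P₁ x / P₀ x)))
    (A : ℝ)
    (hA : A = sSup (Set.range fun x => Real.log (P₁ x / P₀ x))
            - sInf (Set.range fun x => Real.log (P₁ x / P₀ x)))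
    (C : ℝ) (hC : C = min (klDivR P₁ P₀) (klDivR P₀ P₁))
    (hApos : 0 < A) (hCpos : 0 < C)
    (n kstar : ℕ) (hkstar₁ : 1 < kstar) (hkstar₂ : kstar ≤ n)
    (x : ℕ → Ω → ℝ) (hxmeas : ∀ i, Measurable (x i))
    (hindep : iIndepFun
        (fun i : Fin n => x ((i : ℕ) + 1)) Prb)
    (hlaw₀ : ∀ i ∈ Finset.Icc 1 n, i < kstar →
        Measure.map (x i) Prb = densityMeasure P₀)
    (hlaw₁ : ∀ i ∈ Finset.Icc 1 n, kstar ≤ i →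
        Measure.map (x i) Prb = densityMeasure P₁)
    (khat : Ω → ℕ)
    (hkhat : ∀ ω, khat ω ∈ Finset.Icc 1 n ∧ ∀ k ∈ Finset.Icc 1 n,
        (∑ m ∈ Finset.Icc k n, Real.log (P₁ (x m ω) / P₀ (x m ω)))
          ≤ ∑ m ∈ Finset.Icc (khat ω) n, Real.log (P₁ (x m ω) / P₀ (x m ω)))
    (β α : ℝ) (hβ : 0 < β)
    (hα : α = 2 * A ^ 2 / C ^ 2 * Real.log (32 / (3 * β))) :
    ENNReal.ofReal (1 - β) ≤ Prb {ω | |(khat ω : ℝ) - (kstar : ℝ)| < α} := by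
  classical
  -- trivial case β ≥ 1
  rcases le_or_gt 1 β with hβ1 | hβ1
  · rw [ENNReal.ofReal_eq_zero.2 (by linarith)]
    exact zero_le
  -- setup
  set L : ℝ → ℝ := fun y => Real.log (P₁ y / P₀ y) with hL
  have hLmeas : Measurable L := (hP₁.measurable.div hP₀.measurable).log
  set lo : ℝ := sInf (Set.range fun x => Real.log (P₁ x / P₀ x)) with hlo
  set hi : ℝ := sSup (Set.range fun x => Real.log (P₁ x / P₀ x)) with hhi
  have hA' : A = hi - lo := hA
  have hbd : ∀ y, L y ∈ Set.Icc lo hi := fun y =>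
    ⟨csInf_le hbddBelow (Set.mem_range_self y), le_csSup hbddAbove (Set.mem_range_self y)⟩
  have hlelohi : lo < hi := by
    rcases lt_or_ge lo hi with h | h
    · exact h
    · exfalso; rw [hA'] at hApos; linarith
  -- positivity facts
  have hα0 : 0 < α := by
    rw [hα]
    apply mul_pos (by positivity)
    apply Real.log_pos
    rw [lt_div_iff₀ (by linarith)]
    linarith
  set l : ℝ := C / A ^ 2 with hldef
  have hlpos : 0 < l := div_pos hCpos (by positivity)
  set ρ : ℝ := Real.exp (-C ^ 2 / (2 * A ^ 2)) with hρdef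
  set q : ℝ := 3 * β / 32 with hqdef
  have hq0 : 0 ≤ q := by positivity
  -- KL means
  haveI : IsProbabilityMeasure (densityMeasure P₀) := isProbabilityMeasure_densityMeasure hP₀
  haveI : IsProbabilityMeasure (densityMeasure P₁) := isProbabilityMeasure_densityMeasure hP₁
  have hklpt : ∀ y, P₀ y * Real.log (P₀ y / P₁ y) = -(P₀ y * L y) := by
    intro y
    by_cases h0 : P₀ y = 0
    · simp [h0]
    by_cases h1 : P₁ y = 0
    · simp [hL, h1, Real.log_zero]
    · rw [hL]
      have : P₀ y / P₁ y = (P₁ y / P₀ y)⁻¹ := by rw [inv_div]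
      rw [this, Real.log_inv]
      ring
  have hmean₀ : ∫ y, L y ∂(densityMeasure P₀) ≤ -C := by
    rw [integral_densityMeasure hP₀ L]
    have h1 : klDivR P₀ P₁ = -∫ y, P₀ y * L y := by
      rw [klDivR]
      rw [show (fun y => P₀ y * Real.log (P₀ y / P₁ y)) = fun y => -(P₀ y * L y) from
        funext hklpt]
      exact integral_neg _
    have h2 : C ≤ klDivR P₀ P₁ := hC ▸ min_le_right _ _
    linarith
  have hmean₁ : ∫ y, -L y ∂(densityMeasure P₁) ≤ -C := by
    have h1 : ∫ y, -L y ∂(densityMeasure P₁) = -∫ y, L y ∂(densityMeasure P₁) :=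
      integral_neg _
    rw [h1, integral_densityMeasure hP₁ L]
    have h2 : C ≤ klDivR P₁ P₀ := hC ▸ min_le_left _ _
    have h3 : klDivR P₁ P₀ = ∫ y, P₁ y * L y := rfl
    linarith
  -- mgf bounds on the real line
  have hmgf₀ : ∫ y, Real.exp (l * L y) ∂(densityMeasure P₀) ≤ ρ := by
    have := mgf_bound_of_mean_le (ν := densityMeasure P₀) hLmeas hbd hCpos
      (by linarith) hmean₀
    rw [← hA'] at this
    simpa [hldef, hρdef, mul_comm] using this
  have hmgf₁ : ∫ y, Real.exp (l * -L y) ∂(densityMeasure P₁) ≤ ρ := by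
    have := mgf_bound_of_mean_le (ν := densityMeasure P₁) (W := fun y => -L y)
      hLmeas.neg (lo := -hi) (hi := -lo)
      (fun y => ⟨neg_le_neg (hbd y).2, neg_le_neg (hbd y).1⟩) hCpos
      (by linarith) hmean₁
    rw [show -lo - -hi = hi - lo by ring, ← hA'] at this
    simpa [hldef, hρdef, mul_comm] using this
  -- the composed random variables
  set Z : Fin n → Ω → ℝ := fun i => L ∘ x ((i : ℕ) + 1) with hZ
  set Z' : Fin n → Ω → ℝ := fun i => (fun t => -t) ∘ L ∘ x ((i : ℕ) + 1) with hZ'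
  have hZmeas : ∀ i, Measurable (Z i) := fun i => hLmeas.comp (hxmeas _)
  have hZ'meas : ∀ i, Measurable (Z' i) := fun i => (hLmeas.comp (hxmeas _)).neg
  have hZindep : iIndepFun Z Prb :=
    hindep.comp (fun _ => L) (fun _ => hLmeas)
  have hZ'indep : iIndepFun Z' Prb :=
    hindep.comp (fun _ => (fun t => -t) ∘ L) (fun _ => hLmeas.neg)
  have hZbd : ∀ i ω, Z i ω ∈ Set.Icc lo hi := fun i ω => hbd _
  have hZ'bd : ∀ i ω, Z' i ω ∈ Set.Icc (-hi) (-lo) := fun i ω =>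
    ⟨neg_le_neg (hbd _).2, neg_le_neg (hbd _).1⟩
  -- transfer of mgf bounds
  have hmgfZ : ∀ i : Fin n, (i : ℕ) + 1 < kstar → ∫ ω, Real.exp (l * Z i ω) ∂Prb ≤ ρ := by
    intro i hik
    have hmem : (i : ℕ) + 1 ∈ Finset.Icc 1 n := by
      simp only [Finset.mem_Icc]
      exact ⟨by omega, by omega⟩
    have hlaw := hlaw₀ ((i : ℕ) + 1) hmem hik
    have : ∫ ω, Real.exp (l * Z i ω) ∂Prb
        = ∫ y, Real.exp (l * L y) ∂(densityMeasure P₀) := by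
      rw [← hlaw, integral_map (hxmeas _).aemeasurable
        ((hLmeas.const_mul l).exp.aestronglyMeasurable)]
      rfl
    rw [this]; exact hmgf₀
  have hmgfZ' : ∀ i : Fin n, kstar ≤ (i : ℕ) + 1 → ∫ ω, Real.exp (l * Z' i ω) ∂Prb ≤ ρ := by
    intro i hik
    have hmem : (i : ℕ) + 1 ∈ Finset.Icc 1 n := by
      simp only [Finset.mem_Icc]
      exact ⟨by omega, by omega⟩
    have hlaw := hlaw₁ ((i : ℕ) + 1) hmem hik
    have : ∫ ω, Real.exp (l * Z' i ω) ∂Prb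
        = ∫ y, Real.exp (l * -L y) ∂(densityMeasure P₁) := by
      rw [← hlaw, integral_map (hxmeas _).aemeasurable (f := fun y => Real.exp (l * -L y))
        ((hLmeas.neg.const_mul l).exp.aestronglyMeasurable)]
      rfl
    rw [this]; exact hmgf₁
  -- index sets
  have hIcoL_lt : ∀ m, ∀ j ∈ Finset.Ico (kstar - 1 - m) (kstar - 1), j < n := by
    intro m j hj
    rw [Finset.mem_Ico] at hj
    omega
  have hIcoR_lt : ∀ m, ∀ j ∈ (Finset.Ico (kstar - 1) (kstar - 1 + m)).filter (· < n), j < n := by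
    intro m j hj
    exact (Finset.mem_filter.1 hj).2
  set sL : ℕ → Finset (Fin n) := fun m =>
    (Finset.Ico (kstar - 1 - m) (kstar - 1)).attachFin (hIcoL_lt m) with hsL
  set sR : ℕ → Finset (Fin n) := fun m =>
    ((Finset.Ico (kstar - 1) (kstar - 1 + m)).filter (· < n)).attachFin (hIcoR_lt m) with hsR
  set ML : Finset ℕ := (Finset.Icc 1 (kstar - 1)).filter (fun m => α ≤ (m : ℝ)) with hML
  set MR : Finset ℕ := (Finset.Icc 1 (n - kstar)).filter (fun m => α ≤ (m : ℝ)) with hMR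
  -- membership facts
  have hMLmem : ∀ m ∈ ML, 1 ≤ m ∧ m ≤ kstar - 1 ∧ α ≤ (m : ℝ) := by
    intro m hm
    rw [hML, Finset.mem_filter, Finset.mem_Icc] at hm
    exact ⟨hm.1.1, hm.1.2, hm.2⟩
  have hMRmem : ∀ m ∈ MR, 1 ≤ m ∧ m ≤ n - kstar ∧ α ≤ (m : ℝ) := by
    intro m hm
    rw [hMR, Finset.mem_filter, Finset.mem_Icc] at hm
    exact ⟨hm.1.1, hm.1.2, hm.2⟩
  have hsLmem : ∀ m (i : Fin n), i ∈ sL m ↔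
      (kstar - 1 - m ≤ (i : ℕ) ∧ (i : ℕ) < kstar - 1) := by
    intro m i
    rw [hsL, Finset.mem_attachFin, Finset.mem_Ico]
  have hsRmem : ∀ m (i : Fin n), i ∈ sR m ↔
      (kstar - 1 ≤ (i : ℕ) ∧ (i : ℕ) < kstar - 1 + m) := by
    intro m i
    rw [hsR, Finset.mem_attachFin, Finset.mem_filter, Finset.mem_Ico]
    have : (i : ℕ) < n := i.2
    tauto
  -- q bound
  have hexplog : Real.exp (-Real.log (32 / (3 * β))) = q := by
    rw [Real.exp_neg, Real.exp_log (by positivity), hqdef]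
    rw [inv_div]
  have hqbound : ∀ m : ℕ, α ≤ (m : ℝ) → ρ ^ m ≤ q := by
    intro m hm
    have h1 : ρ ^ m = Real.exp ((m : ℝ) * (-C ^ 2 / (2 * A ^ 2))) := by
      rw [Real.exp_nat_mul]
    rw [h1, ← hexplog]
    apply Real.exp_le_exp.2
    have hpos : (0 : ℝ) < C ^ 2 / (2 * A ^ 2) := by positivity
    have hαlog : α * (C ^ 2 / (2 * A ^ 2)) = Real.log (32 / (3 * β)) := by
      rw [hα]
      field_simp
    have hring : (m : ℝ) * (-C ^ 2 / (2 * A ^ 2)) = -((m : ℝ) * (C ^ 2 / (2 * A ^ 2))) := by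
      ring
    rw [hring]
    have := mul_le_mul_of_nonneg_right hm hpos.le
    linarith
  -- cardinalities
  have hcardL : ∀ m ∈ ML, (sL m).card = m := by
    intro m hm
    obtain ⟨h1, h2, _⟩ := hMLmem m hm
    rw [hsL, Finset.card_attachFin, Nat.card_Ico]
    omega
  have hcardR : ∀ m ∈ MR, (sR m).card = m := by
    intro m hm
    obtain ⟨h1, h2, _⟩ := hMRmem m hm
    rw [hsR, Finset.card_attachFin, Finset.filter_true_of_mem, Nat.card_Ico]
    · omega
    · intro j hj
      rw [Finset.mem_Ico] at hj
      omega
  -- apply the first passage bound (left)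
  have hPL : Prb (⋃ m ∈ ML, {ω | 0 ≤ ∑ i ∈ sL m, Z i ω}) ≤ ENNReal.ofReal q := by
    refine first_passage_bound (ρ := ρ) hZmeas hZindep hlpos.le hZbd ML sL ?_ ?_ q hq0 ?_
    · intro m _ m' _ hmm' i hi
      rw [hsLmem] at hi ⊢
      omega
    · intro m hm i hi
      rw [hsLmem] at hi
      exact hmgfZ i (by omega)
    · intro m hm
      rw [hcardL m hm]
      exact hqbound m (hMLmem m hm).2.2
  -- apply the first passage bound (right)
  have hPR : Prb (⋃ m ∈ MR, {ω | 0 ≤ ∑ i ∈ sR m, Z' i ω}) ≤ ENNReal.ofReal q := by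
    refine first_passage_bound (ρ := ρ) hZ'meas hZ'indep hlpos.le hZ'bd MR sR ?_ ?_ q hq0 ?_
    · intro m _ m' _ hmm' i hi
      rw [hsRmem] at hi ⊢
      omega
    · intro m hm i hi
      rw [hsRmem] at hi
      exact hmgfZ' i (by omega)
    · intro m hm
      rw [hcardR m hm]
      exact hqbound m (hMRmem m hm).2.2
  -- the bad event
  set Gleft : Set Ω := ⋃ m ∈ ML, {ω | 0 ≤ ∑ i ∈ sL m, Z i ω} with hGleftdef
  set Gright : Set Ω := ⋃ m ∈ MR, {ω | 0 ≤ ∑ i ∈ sR m, Z' i ω} with hGrightdef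
  have hGleftmeas : MeasurableSet Gleft :=
    MeasurableSet.biUnion (Set.to_countable _) fun m _ =>
      measurableSet_le measurable_const (Finset.measurable_sum _ fun i _ => hZmeas i)
  have hGrightmeas : MeasurableSet Gright :=
    MeasurableSet.biUnion (Set.to_countable _) fun m _ =>
      measurableSet_le measurable_const (Finset.measurable_sum _ fun i _ => hZ'meas i)
  -- inclusion of the good event
  have hincl : (Gleft ∪ Gright)ᶜ ⊆ {ω | |(khat ω : ℝ) - (kstar : ℝ)| < α} := by
    intro ω hω
    simp only [Set.mem_compl_iff, Set.mem_union, not_or] at hω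
    obtain ⟨hωL, hωR⟩ := hω
    obtain ⟨hk1, hk2⟩ := hkhat ω
    rw [Finset.mem_Icc] at hk1
    have hmax : (∑ j ∈ Finset.Icc kstar n, L (x j ω)) ≤
        ∑ j ∈ Finset.Icc (khat ω) n, L (x j ω) :=
      hk2 kstar (Finset.mem_Icc.2 ⟨by omega, hkstar₂⟩)
    by_contra habs
    simp only [Set.mem_setOf_eq, not_lt] at habs
    rcases lt_trichotomy (khat ω) kstar with hlt | heq | hgt
    · -- khat < kstar
      set m := kstar - khat ω with hm
      have hmα : α ≤ (m : ℝ) := by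
        have h1 : |(khat ω : ℝ) - (kstar : ℝ)| = (kstar : ℝ) - (khat ω : ℝ) := by
          rw [abs_sub_comm, abs_of_nonneg]
          have : (khat ω : ℝ) ≤ (kstar : ℝ) := by exact_mod_cast hlt.le
          linarith
        have h2 : ((m : ℕ) : ℝ) = (kstar : ℝ) - (khat ω : ℝ) := by
          rw [hm, Nat.cast_sub hlt.le]
        rw [h1] at habs
        rw [h2]
        exact habs
      have hmML : m ∈ ML := by
        rw [hML, Finset.mem_filter, Finset.mem_Icc]
        exact ⟨⟨by omega, by omega⟩, hmα⟩
      apply hωL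
      rw [hGleftdef]
      simp only [Set.mem_iUnion]
      refine ⟨m, hmML, ?_⟩
      simp only [Set.mem_setOf_eq]
      have hsum : ∑ i ∈ sL m, Z i ω = ∑ j ∈ Finset.Icc (khat ω) (kstar - 1), L (x j ω) := by
        have h1 : ∑ i ∈ sL m, Z i ω
            = ∑ j ∈ Finset.Ico (kstar - 1 - m) (kstar - 1), L (x (j + 1) ω) := by
          rw [hsL]
          exact sum_attachFin_eq _ _ (fun j => L (x j ω))
        rw [h1, sum_Ico_shift _ _ (fun j => L (x j ω))]
        have hbnd : kstar - 1 - m + 1 = khat ω := by omega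
        rw [hbnd]
      rw [hsum]
      have hsplit := sum_Icc_split (fun j => L (x j ω)) (khat ω) kstar n hlt.le (by omega)
      have hIcoIcc : Finset.Ico (khat ω) kstar = Finset.Icc (khat ω) (kstar - 1) := by
        rw [← Finset.Ico_add_one_right_eq_Icc]
        congr 1
        omega
      rw [hIcoIcc] at hsplit
      simp only [hsplit] at hmax
      linarith
    · -- khat = kstar : contradiction with α > 0
      rw [heq] at habs
      simp only [sub_self, abs_zero] at habs
      linarith
    · -- kstar < khat
      set m := khat ω - kstar with hm
      have hmα : α ≤ (m : ℝ) := by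
        have h1 : |(khat ω : ℝ) - (kstar : ℝ)| = (khat ω : ℝ) - (kstar : ℝ) := by
          rw [abs_of_nonneg]
          have : (kstar : ℝ) ≤ (khat ω : ℝ) := by exact_mod_cast hgt.le
          linarith
        have h2 : ((m : ℕ) : ℝ) = (khat ω : ℝ) - (kstar : ℝ) := by
          rw [hm, Nat.cast_sub hgt.le]
        rw [h1] at habs
        rw [h2]
        exact habs
      have hmMR : m ∈ MR := by
        rw [hMR, Finset.mem_filter, Finset.mem_Icc]
        exact ⟨⟨by omega, by omega⟩, hmα⟩
      apply hωR
      rw [hGrightdef]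
      simp only [Set.mem_iUnion]
      refine ⟨m, hmMR, ?_⟩
      simp only [Set.mem_setOf_eq]
      have hsum : ∑ i ∈ sR m, Z' i ω
          = -∑ j ∈ Finset.Icc kstar (khat ω - 1), L (x j ω) := by
        have h1 : ∑ i ∈ sR m, Z' i ω
            = ∑ j ∈ (Finset.Ico (kstar - 1) (kstar - 1 + m)).filter (· < n),
                -L (x (j + 1) ω) := by
          rw [hsR]
          exact sum_attachFin_eq _ _ (fun j => -L (x j ω))
        rw [h1, Finset.filter_true_of_mem, sum_Ico_shift _ _ (fun j => -L (x j ω))]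
        · rw [← Finset.sum_neg_distrib]
          have hbnd1 : kstar - 1 + 1 = kstar := by omega
          have hbnd2 : kstar - 1 + m = khat ω - 1 := by omega
          rw [hbnd1, hbnd2]
        · intro j hj
          rw [Finset.mem_Ico] at hj
          omega
      rw [hsum]
      have hsplit := sum_Icc_split (fun j => L (x j ω)) kstar (khat ω) n hgt.le (by omega)
      have hIcoIcc : Finset.Ico kstar (khat ω) = Finset.Icc kstar (khat ω - 1) := by
        rw [← Finset.Ico_add_one_right_eq_Icc]
        congr 1
        omega
      rw [hIcoIcc] at hsplit
      simp only [hsplit] at hmax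
      linarith
  -- final arithmetic
  have hGmeas : MeasurableSet (Gleft ∪ Gright) := hGleftmeas.union hGrightmeas
  have hPG : Prb (Gleft ∪ Gright) ≤ ENNReal.ofReal (3 * β / 16) := by
    calc Prb (Gleft ∪ Gright) ≤ Prb Gleft + Prb Gright := measure_union_le _ _
      _ ≤ ENNReal.ofReal q + ENNReal.ofReal q := add_le_add hPL hPR
      _ = ENNReal.ofReal (q + q) := (ENNReal.ofReal_add hq0 hq0).symm
      _ = ENNReal.ofReal (3 * β / 16) := by
          rw [hqdef]
          congr 1
          ring
  calc ENNReal.ofReal (1 - β) ≤ ENNReal.ofReal (1 - 3 * β / 16) :=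
        ENNReal.ofReal_le_ofReal (by linarith)
    _ = 1 - ENNReal.ofReal (3 * β / 16) := by
        rw [ENNReal.ofReal_sub 1 (by positivity), ENNReal.ofReal_one]
    _ ≤ 1 - Prb (Gleft ∪ Gright) := tsub_le_tsub_left hPG 1
    _ = Prb ((Gleft ∪ Gright)ᶜ) := (prob_compl_eq_one_sub hGmeas).symm
    _ ≤ Prb {ω | |(khat ω : ℝ) - (kstar : ℝ)| < α} := measure_mono hincl
end

section
/- Let ε, δ > 0 and let P_0, P_1 be probability densities such that A_δ = min{t : max_{i∈{0,1}} Pr_{x~P_i}[2|log(P_1(x)/P_0(x))| > t] < δ/2} is finite. Fix an index j ∈ {1,…,n}, indices i, i' ∈ {0,1}, and arbitrary values x_1,…,x_{j−1}, x_{j+1},…,x_n ∈ ℝ. Let X_i be the random database with j-th entry drawn from P_i and all other entries as fixed, and let X'_{i'} be the random database with j-th entry an independent draw from P_{i'} and all other entries as fixed. Let M(X) = argmax_{1≤k≤n}(ℓ(k,X) + Z_k) with Z_1,…,Z_n i.i.d. Laplace(A_δ/ε). Then for every S ⊆ {1,…,n}: Pr[M(X_i) ∈ S] ≤ e^ε ·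 Pr[M(X'_{i'}) ∈ S] + δ, where the probabilities are over the noise and over the random j-th entries. -/
open MeasureTheory ProbabilityTheory

/-- The set of thresholds `t` such that
`max_{i∈{0,1}} Pr_{x ~ P_i}[2|log (P₁ x / P₀ x)| > t] < δ/2`;
its minimum is the quantity `A_δ` of the paper. -/
def AdeltaSet (P₀ P₁ : ℝ → ℝ) (δ : ℝ) : Set ℝ :=
  {t : ℝ | densityMeasure P₀ {x | t < 2 * |Real.log (P₁ x / P₀ x)|} < ENNReal.ofReal (δ / 2)
         ∧ densityMeasure P₁ {x | t < 2 * |Real.log (P₁ x / P₀ x)|} < ENNReal.ofReal (δ / 2)}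

lemma laplaceMeasure_of_nonpos {b : ℝ} (hb : b ≤ 0) : laplaceMeasure b = 0 := by
  have h : (fun x : ℝ => ENNReal.ofReal (Real.exp (-|x| / b) / (2 * b))) = fun _ => 0 := by
    funext x
    rcases eq_or_lt_of_le hb with h | h
    · simp [h]
    · have : Real.exp (-|x| / b) / (2 * b) ≤ 0 :=
        div_nonpos_of_nonneg_of_nonpos (Real.exp_pos _).le (by linarith)
      simp [ENNReal.ofReal_eq_zero.2 this]
  simp [laplaceMeasure, h]

lemma laplace_density_shift {b : ℝ} (hb : 0 < b) {s : ℝ} (hs : 0 ≤ s) (y : ℝ) :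
    Real.exp (-|y - s| / b) / (2 * b) ≤ Real.exp (s / b) * (Real.exp (-|y| / b) / (2 * b)) := by
  have habs : |y| - |y - s| ≤ s := by
    have h2 : |y - (y - s)| = s := by
      rw [show y - (y - s) = s by ring, abs_of_nonneg hs]
    have := abs_sub_abs_le_abs_sub y (y - s)
    linarith
  have h1 : -|y - s| / b ≤ s / b + -|y| / b := by
    rw [← add_div]
    gcongr
    linarith
  calc Real.exp (-|y - s| / b) / (2 * b)
      ≤ Real.exp (s / b + -|y| / b) / (2 * b) := by
        gcongr
    _ = Real.exp (s / b) * (Real.exp (-|y| / b) / (2 * b)) := by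
        rw [Real.exp_add, mul_div_assoc]

lemma laplaceMeasure_shift_le {b : ℝ} (hb : 0 < b) {s : ℝ} (hs : 0 ≤ s) {T : Set ℝ}
    (hT : MeasurableSet T) :
    laplaceMeasure b ((fun x => x + s) ⁻¹' T)
      ≤ ENNReal.ofReal (Real.exp (s / b)) * laplaceMeasure b T := by
  have hp : Measurable fun x : ℝ => ENNReal.ofReal (Real.exp (-|x| / b) / (2 * b)) := by
    fun_prop
  rw [laplaceMeasure, withDensity_apply _ (hT.preimage (by fun_prop)),
    withDensity_apply _ hT]
  calc ∫⁻ x in (fun x => x + s) ⁻¹' T, ENNReal.ofReal (Real.exp (-|x| / b) / (2 * b))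
      = ∫⁻ x, ((fun y => T.indicator
          (fun y => ENNReal.ofReal (Real.exp (-|y - s| / b) / (2 * b))) y) (x + s)) := by
        rw [← lintegral_indicator (hT.preimage (by fun_prop))]
        congr 1
        funext x
        by_cases hx : x + s ∈ T <;>
          simp [Set.indicator, hx, Set.mem_preimage]
    _ = ∫⁻ y, T.indicator (fun y => ENNReal.ofReal (Real.exp (-|y - s| / b) / (2 * b))) y :=
        lintegral_add_right_eq_self _ s
    _ ≤ ∫⁻ y, T.indicator
          (fun y => ENNReal.ofReal (Real.exp (s / b)) *
            ENNReal.ofReal (Real.exp (-|y| / b) / (2 * b))) y := by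
        refine lintegral_mono fun y => ?_
        by_cases hy : y ∈ T
        · simp only [Set.indicator_of_mem hy]
          rw [← ENNReal.ofReal_mul (Real.exp_pos _).le]
          exact ENNReal.ofReal_le_ofReal (laplace_density_shift hb hs y)
        · simp [Set.indicator_of_notMem hy]
    _ = ENNReal.ofReal (Real.exp (s / b)) *
          ∫⁻ y in T, ENNReal.ofReal (Real.exp (-|y| / b) / (2 * b)) := by
        rw [← lintegral_indicator hT, ← lintegral_const_mul' _ _ (by simp)]
        congr 1
        funext y
        by_cases hy : y ∈ T <;> simp [Set.indicator, hy]

lemma pi_laplace_shift {n : ℕ} {b : ℝ} (hb : 0 < b) [SigmaFinite (laplaceMeasure b)]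
    (k : Fin n) {s : ℝ} (hs : 0 ≤ s) {W : Set (Fin n → ℝ)} (hW : MeasurableSet W) :
    Measure.pi (fun _ : Fin n => laplaceMeasure b)
        ((fun z => Function.update z k (z k + s)) ⁻¹' W)
      ≤ ENNReal.ofReal (Real.exp (s / b)) *
          Measure.pi (fun _ : Fin n => laplaceMeasure b) W := by
  classical
  set ν := Measure.pi (fun _ : Fin n => laplaceMeasure b) with hν
  set ρ := Measure.pi (fun _ : {i : Fin n // ¬ i = k} => laplaceMeasure b) with hρ
  let e₁ := MeasurableEquiv.piEquivPiSubtypeProd (fun _ : Fin n => ℝ) (fun i => i = k)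
  let pu := MeasurableEquiv.piUnique (fun _ : {i : Fin n // i = k} => ℝ)
  let e₂ := MeasurableEquiv.prodCongr pu (MeasurableEquiv.refl ({i : Fin n // ¬ i = k} → ℝ))
  let E := e₁.trans e₂
  have hE : MeasurePreserving E ν ((laplaceMeasure b).prod ρ) := by
    have h1 : MeasurePreserving (⇑e₁) ν
        ((Measure.pi fun _ : {i : Fin n // i = k} => laplaceMeasure b).prod ρ) := by
      convert measurePreserving_piEquivPiSubtypeProd
        (fun _ : Fin n => laplaceMeasure b) (fun i => i = k) using 2
      congr!
    have h2 : MeasurePreserving (⇑e₂)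
        ((Measure.pi fun _ : {i : Fin n // i = k} => laplaceMeasure b).prod ρ)
        ((laplaceMeasure b).prod ρ) := by
      have hu : MeasurePreserving (⇑pu)
          (Measure.pi fun _ : {i : Fin n // i = k} => laplaceMeasure b) (laplaceMeasure b) :=
        measurePreserving_piUnique _
      have := hu.prod (MeasurePreserving.id ρ)
      convert this using 1
      rfl
    exact h2.comp h1
  have hcomm : ∀ z : Fin n → ℝ,
      E (Function.update z k (z k + s)) = ((E z).1 + s, (E z).2) := by
    intro z
    refine Prod.ext ?_ ?_
    · show pu (fun i : {i : Fin n // i = k} => Function.update z k (z k + s) i.1) = _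
      have : ∀ i : {i : Fin n // i = k}, Function.update z k (z k + s) i.1 = z i.1 + s := by
        rintro ⟨i, rfl⟩; simp
      simp only [this]
      rfl
    · show (fun i : {i : Fin n // ¬ i = k} => Function.update z k (z k + s) i.1) = _
      funext i
      exact Function.update_of_ne i.2 _ _
  set V := E.symm ⁻¹' W with hV
  have hVmeas : MeasurableSet V := E.symm.measurable hW
  have hτW : (fun z => Function.update z k (z k + s)) ⁻¹' W
      = ⇑E ⁻¹' ((fun q : ℝ × ({i : Fin n // ¬ i = k} → ℝ) => (q.1 + s, q.2)) ⁻¹' V) := by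
    ext z
    simp only [Set.mem_preimage, hV, hcomm z]
    rw [← hcomm z, MeasurableEquiv.symm_apply_apply]
  have hσmeas : Measurable fun q : ℝ × ({i : Fin n // ¬ i = k} → ℝ) => (q.1 + s, q.2) := by
    fun_prop
  have hWE : W = ⇑E ⁻¹' V := by
    ext z; simp [hV]
  rw [hτW, ← MeasurableEquiv.map_apply E, hE.map_eq, hWE, ← MeasurableEquiv.map_apply E,
    hE.map_eq]
  rw [Measure.prod_apply_symm (hσmeas hVmeas), Measure.prod_apply_symm hVmeas]
  rw [← lintegral_const_mul' _ _ (by simp)]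
  refine lintegral_mono fun r => ?_
  have hslice : MeasurableSet {x : ℝ | (x, r) ∈ V} :=
    (measurable_prodMk_right : Measurable fun x : ℝ => (x, r)) hVmeas
  have : (fun x : ℝ => (x, r)) ⁻¹' ((fun q : ℝ × ({i : Fin n // ¬ i = k} → ℝ) =>
      (q.1 + s, q.2)) ⁻¹' V) = (fun x => x + s) ⁻¹' {x : ℝ | (x, r) ∈ V} := by
    ext x; simp
  rw [this]
  exact laplaceMeasure_shift_le hb hs hslice

lemma indep_transfer {Ω : Type*} [MeasurableSpace Ω] (Prb : Measure Ω) [IsProbabilityMeasure Prb]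
    (n : ℕ) (Z : ℕ → Ω → ℝ) (ξ : Ω → ℝ) (hZmeas : ∀ k, Measurable (Z k)) (hξmeas : Measurable ξ)
    (ζ μ : Measure ℝ) [IsProbabilityMeasure ζ] [IsProbabilityMeasure μ]
    (hZlaw : ∀ k : Fin n, Measure.map (Z ((k : ℕ) + 1)) Prb = ζ)
    (hξlaw : Measure.map ξ Prb = μ)
    (hindep : iIndepFun
        (Sum.elim (fun k : Fin n => Z ((k : ℕ) + 1)) (fun _ : Unit => ξ)) Prb)
    {V : Set ((Fin n → ℝ) × ℝ)} (hV : MeasurableSet V) :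
    Prb {ω | ((fun k : Fin n => Z ((k : ℕ) + 1) ω, ξ ω) : (Fin n → ℝ) × ℝ) ∈ V}
      = ((Measure.pi fun _ : Fin n => ζ).prod μ) V := by
  classical
  set F : Fin n ⊕ Unit → Ω → ℝ :=
    Sum.elim (fun k : Fin n => Z ((k : ℕ) + 1)) (fun _ => ξ) with hF
  have hFmeas : ∀ i, Measurable (F i) := by
    rintro (k | u)
    · exact hZmeas _
    · exact hξmeas
  set m : Fin n ⊕ Unit → Measure ℝ :=
    Sum.elim (fun _ : Fin n => ζ) (fun _ : Unit => μ) with hm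
  haveI : ∀ i, IsProbabilityMeasure (m i) := by
    rintro (k | u) <;> · simp only [hm, Sum.elim_inl, Sum.elim_inr]; infer_instance
  haveI : ∀ i, SigmaFinite (m i) := fun i => inferInstance
  set Φ : Ω → (Fin n ⊕ Unit → ℝ) := fun ω i => F i ω with hΦ
  have hΦmeas : Measurable Φ := measurable_pi_lambda _ hFmeas
  have hmap : Measure.pi m = Measure.map Φ Prb := by
    refine Measure.pi_eq fun t ht => ?_
    rw [Measure.map_apply hΦmeas (MeasurableSet.univ_pi ht)]
    have hpre : Φ ⁻¹' Set.univ.pi t = ⋂ i ∈ Finset.univ, F i ⁻¹' t i := by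
      ext ω
      simp [hΦ, Set.mem_pi]
    rw [hpre, hindep.measure_inter_preimage_eq_mul Finset.univ (fun i _ => ht i)]
    refine Finset.prod_congr rfl fun i _ => ?_
    rcases i with k | u
    · show Prb (Z ((k : ℕ) + 1) ⁻¹' t (Sum.inl k)) = ζ (t (Sum.inl k))
      rw [← hZlaw k, Measure.map_apply (hZmeas _) (ht _)]
    · show Prb (ξ ⁻¹' t (Sum.inr u)) = μ (t (Sum.inr u))
      rw [← hξlaw, Measure.map_apply hξmeas (ht _)]
  set G : (Fin n ⊕ Unit → ℝ) → (Fin n → ℝ) × ℝ :=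
    fun f => (fun k => f (Sum.inl k), f (Sum.inr ())) with hG
  have hGmeas : Measurable G := by
    refine Measurable.prod ?_ ?_
    · exact measurable_pi_lambda _ fun k => measurable_pi_apply _
    · exact measurable_pi_apply _
  have hset : {ω | ((fun k : Fin n => Z ((k : ℕ) + 1) ω, ξ ω) : (Fin n → ℝ) × ℝ) ∈ V}
      = Φ ⁻¹' (G ⁻¹' V) := rfl
  rw [hset, ← Measure.map_apply hΦmeas (hGmeas hV), ← hmap]
  -- now: Measure.pi m (G ⁻¹' V) = (pi ζ).prod μ V
  have hsum := measurePreserving_sumPiEquivProdPi_symm (X := fun _ : Fin n ⊕ Unit => ℝ) m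
  set e := MeasurableEquiv.sumPiEquivProdPi (fun _ : Fin n ⊕ Unit => ℝ) with he
  have h1 : Measure.pi m (G ⁻¹' V)
      = ((Measure.pi fun _ : Fin n => ζ).prod (Measure.pi fun _ : Unit => μ))
          (⇑e.symm ⁻¹' (G ⁻¹' V)) := by
    rw [← hsum.map_eq, Measure.map_apply e.symm.measurable (hGmeas hV)]
    rfl
  rw [h1]
  have hu := measurePreserving_funUnique (α := Unit) μ
  have hprod : MeasurePreserving
      (Prod.map (id : (Fin n → ℝ) → (Fin n → ℝ)) ⇑(MeasurableEquiv.funUnique Unit ℝ))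
      ((Measure.pi fun _ : Fin n => ζ).prod (Measure.pi fun _ : Unit => μ))
      ((Measure.pi fun _ : Fin n => ζ).prod μ) :=
    (MeasurePreserving.id _).prod hu
  have h2 : ⇑e.symm ⁻¹' (G ⁻¹' V)
      = (Prod.map (id : (Fin n → ℝ) → (Fin n → ℝ))
          ⇑(MeasurableEquiv.funUnique Unit ℝ)) ⁻¹' V := by
    ext p
    rfl
  rw [h2, ← hprod.map_eq, Measure.map_apply hprod.measurable hV]

lemma bad_bound (P₀ P₁ : ℝ → ℝ) {δ A : ℝ}
    (hSne : (AdeltaSet P₀ P₁ δ).Nonempty) (hSbdd : BddBelow (AdeltaSet P₀ P₁ δ))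
    (hA : A = sInf (AdeltaSet P₀ P₁ δ)) (Q : ℝ → ℝ) (hQ : Q = P₀ ∨ Q = P₁) :
    densityMeasure Q {x | A < 2 * |Real.log (P₁ x / P₀ x)|} ≤ ENNReal.ofReal (δ / 2) := by
  set f : ℝ → ℝ := fun x => 2 * |Real.log (P₁ x / P₀ x)| with hf
  set s : ℕ → Set ℝ := fun i => {x | A + 1 / (i + 1) < f x} with hs
  have hU : {x | A < f x} = ⋃ i, s i := by
    ext x
    simp only [Set.mem_setOf_eq, Set.mem_iUnion, hs]
    constructor
    · intro hx
      obtain ⟨i, hi⟩ := exists_nat_one_div_lt (sub_pos.2 hx)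
      exact ⟨i, by linarith [hi]⟩
    · rintro ⟨i, hi⟩
      have : (0 : ℝ) < 1 / (i + 1) := by positivity
      linarith
  have hdir : Directed (· ⊆ ·) s := by
    refine directed_of_isDirected_le ?_
    intro i i' hii' x hx
    simp only [hs, Set.mem_setOf_eq] at hx ⊢
    have h1 : (1 : ℝ) / (i' + 1) ≤ 1 / (i + 1) := by
      apply one_div_le_one_div_of_le (by positivity)
      exact_mod_cast by exact_mod_cast Nat.add_le_add_right hii' 1
    linarith
  have hbound : ∀ i : ℕ, densityMeasure Q (s i) ≤ ENNReal.ofReal (δ / 2) := by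
    intro i
    have hlt : sInf (AdeltaSet P₀ P₁ δ) < A + 1 / (i + 1) := by
      rw [← hA]
      have h0 : (0 : ℝ) < 1 / ((i : ℝ) + 1) := by positivity
      linarith
    obtain ⟨t, ht, htlt⟩ := (csInf_lt_iff hSbdd hSne).1 hlt
    have hsub : s i ⊆ {x | t < f x} := by
      intro x hx
      simp only [hs, Set.mem_setOf_eq] at hx ⊢
      linarith
    refine (measure_mono hsub).trans ?_
    rcases hQ with rfl | rfl
    · exact ht.1.le
    · exact ht.2.le
  rw [hU, Directed.measure_iUnion hdir]
  exact iSup_le hbound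

/-- Theorem 6 of the paper: the weaker privacy guarantee of
`OfflinePCPD` with parameter `δ > 0`.  The database `X_i` has its `j`-th entry drawn
from `P_i` (here `Pi`) and all other entries fixed to `xfix`; `X'_{i'}` has its `j`-th
entry an independent draw from `P_{i'}` (here `Pi'`).  With `Z_1,…,Z_n` i.i.d.
`Lap(A_δ/ε)` noise independent of the random entry, and `K, K'` selecting argmaxes of
the noisy log-likelihoods for the two databases, for every `S ⊆ {1,…,n}`:
`Pr[K ∈ S] ≤ e^ε · Pr[K' ∈ S] + δ`. -/
theorem offlinePCPD_relaxed_privacy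
    {Ω : Type*} [MeasurableSpace Ω] (Prb : Measure Ω) [IsProbabilityMeasure Prb]
    (P₀ P₁ : ℝ → ℝ) (hP₀ : IsDensity P₀) (hP₁ : IsDensity P₁)
    (ε δ : ℝ) (hε : 0 < ε) (hδ : 0 < δ)
    (A : ℝ) (hSne : (AdeltaSet P₀ P₁ δ).Nonempty)
    (hSbdd : BddBelow (AdeltaSet P₀ P₁ δ))
    (hA : A = sInf (AdeltaSet P₀ P₁ δ))
    (n : ℕ) (hn : 1 ≤ n) (j : ℕ) (hj : j ∈ Finset.Icc 1 n)
    (Pi Pi' : ℝ → ℝ) (hPi : Pi = P₀ ∨ Pi = P₁) (hPi' : Pi' = P₀ ∨ Pi' = P₁)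
    (xfix : ℕ → ℝ)
    (ξ ξ' : Ω → ℝ) (hξmeas : Measurable ξ) (hξ'meas : Measurable ξ')
    (Z : ℕ → Ω → ℝ) (hZmeas : ∀ k, Measurable (Z k))
    (hξlaw : Measure.map ξ Prb = densityMeasure Pi)
    (hξ'law : Measure.map ξ' Prb = densityMeasure Pi')
    (hZlaw : ∀ k ∈ Finset.Icc 1 n, Measure.map (Z k) Prb = laplaceMeasure (A / ε))
    (hindep : iIndepFun
        (Sum.elim (fun k : Fin n => Z ((k : ℕ) + 1)) (fun _ : Unit => ξ)) Prb)
    (hindep' : iIndepFun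
        (Sum.elim (fun k : Fin n => Z ((k : ℕ) + 1)) (fun _ : Unit => ξ')) Prb)
    (K K' : Ω → ℕ)
    (hK : ∀ ω, K ω ∈ Finset.Icc 1 n ∧ ∀ k ∈ Finset.Icc 1 n,
        (∑ m ∈ Finset.Icc k n,
            Real.log (P₁ (if m = j then ξ ω else xfix m)
              / P₀ (if m = j then ξ ω else xfix m))) + Z k ω
          ≤ (∑ m ∈ Finset.Icc (K ω) n,
              Real.log (P₁ (if m = j then ξ ω else xfix m)
                / P₀ (if m = j then ξ ω else xfix m))) + Z (K ω) ω)
    (hK' : ∀ ω, K' ω ∈ Finset.Icc 1 n ∧ ∀ k ∈ Finset.Icc 1 n,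
        (∑ m ∈ Finset.Icc k n,
            Real.log (P₁ (if m = j then ξ' ω else xfix m)
              / P₀ (if m = j then ξ' ω else xfix m))) + Z k ω
          ≤ (∑ m ∈ Finset.Icc (K' ω) n,
              Real.log (P₁ (if m = j then ξ' ω else xfix m)
                / P₀ (if m = j then ξ' ω else xfix m))) + Z (K' ω) ω)
    (S : Set ℕ) :
    Prb {ω | K ω ∈ S}
      ≤ ENNReal.ofReal (Real.exp ε) * Prb {ω | K' ω ∈ S} + ENNReal.ofReal δ := by
  classical
  set b := A / ε with hb_def
  haveI hPμ : IsProbabilityMeasure (densityMeasure Pi) := by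
    rw [← hξlaw]; exact Measure.isProbabilityMeasure_map hξmeas.aemeasurable
  haveI hPμ' : IsProbabilityMeasure (densityMeasure Pi') := by
    rw [← hξ'law]; exact Measure.isProbabilityMeasure_map hξ'meas.aemeasurable
  haveI hPζ : IsProbabilityMeasure (laplaceMeasure b) := by
    rw [← hZlaw 1 (Finset.mem_Icc.2 ⟨le_refl 1, hn⟩)]
    exact Measure.isProbabilityMeasure_map (hZmeas 1).aemeasurable
  have hb : 0 < b := by
    by_contra h
    push_neg at h
    have h0 := laplaceMeasure_of_nonpos h
    have h1 : laplaceMeasure b Set.univ = 1 := measure_univ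
    rw [h0] at h1
    simp at h1
  have hA0 : 0 < A := by
    have : b * ε = A := by rw [hb_def]; field_simp
    nlinarith
  set L : ℝ → ℝ := fun v => Real.log (P₁ v / P₀ v) with hL
  have hLmeas : Measurable L := Real.measurable_log.comp (hP₁.measurable.div hP₀.measurable)
  set sfun : ℕ → ℝ → ℝ := fun k v =>
    (∑ m ∈ (Finset.Icc k n).erase j, Real.log (P₁ (xfix m) / P₀ (xfix m)))
      + (if k ≤ j then L v else 0) with hsfun
  have hsum_eq : ∀ (k : ℕ) (v : ℝ),
      (∑ m ∈ Finset.Icc k n,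
          Real.log (P₁ (if m = j then v else xfix m) / P₀ (if m = j then v else xfix m)))
        = sfun k v := by
    intro k v
    by_cases hkj : k ≤ j
    · have hjmem : j ∈ Finset.Icc k n := Finset.mem_Icc.2 ⟨hkj, (Finset.mem_Icc.1 hj).2⟩
      rw [← Finset.add_sum_erase _ _ hjmem]
      have h1 : ∀ m ∈ (Finset.Icc k n).erase j,
          Real.log (P₁ (if m = j then v else xfix m) / P₀ (if m = j then v else xfix m))
            = Real.log (P₁ (xfix m) / P₀ (xfix m)) := fun m hm => by
        rw [if_neg (Finset.ne_of_mem_erase hm)]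
      rw [Finset.sum_congr rfl h1]
      have hjj : (if j = j then v else xfix j) = v := if_pos rfl
      rw [hjj]
      simp only [hsfun, if_pos hkj]
      exact add_comm _ _
    · have hjnot : j ∉ Finset.Icc k n := by
        rw [Finset.mem_Icc]; omega
      have h1 : ∀ m ∈ Finset.Icc k n,
          Real.log (P₁ (if m = j then v else xfix m) / P₀ (if m = j then v else xfix m))
            = Real.log (P₁ (xfix m) / P₀ (xfix m)) := fun m hm => by
        rw [if_neg (by rintro rfl; exact hjnot hm)]
      rw [Finset.sum_congr rfl h1]
      simp only [hsfun, if_neg hkj, Finset.erase_eq_of_notMem hjnot, add_zero]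
  set idx : ℕ → Fin n := fun l => if h : l - 1 < n then ⟨l - 1, h⟩ else ⟨0, hn⟩ with hidx
  have hidx_val : ∀ l ∈ Finset.Icc 1 n, ((idx l : ℕ) + 1 = l) := by
    intro l hl
    rw [Finset.mem_Icc] at hl
    simp only [hidx]
    rw [dif_pos (by omega)]
    show l - 1 + 1 = l
    omega
  have hidx_inj : ∀ l ∈ Finset.Icc 1 n, ∀ l' ∈ Finset.Icc 1 n, l ≠ l' → idx l ≠ idx l' := by
    intro l hl l' hl' hne h
    have h1 := hidx_val l hl
    have h2 := hidx_val l' hl'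
    rw [h] at h1
    omega
  set Zvec : Ω → Fin n → ℝ := fun ω k => Z ((k : ℕ) + 1) ω with hZvec
  set good : ℝ → Prop := fun v => 2 * |L v| ≤ A with hgood
  set Cmax : Set ((Fin n → ℝ) × ℝ) := {q | good q.2 ∧ ∃ k ∈ Finset.Icc 1 n, k ∈ S ∧
    ∀ l ∈ Finset.Icc 1 n, sfun l q.2 + q.1 (idx l) ≤ sfun k q.2 + q.1 (idx k)} with hCmax
  set Cstr : Set ((Fin n → ℝ) × ℝ) := {q | good q.2 ∧ ∃ k ∈ Finset.Icc 1 n, k ∈ S ∧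
    ∀ l ∈ Finset.Icc 1 n, l ≠ k → sfun l q.2 + q.1 (idx l) < sfun k q.2 + q.1 (idx k)}
    with hCstr
  have hsfunmeas : ∀ k : ℕ, Measurable (sfun k) := by
    intro k
    apply Measurable.add measurable_const
    split_ifs
    · exact hLmeas
    · exact measurable_const
  have hgoodmeas : MeasurableSet {q : (Fin n → ℝ) × ℝ | good q.2} := by
    have : Measurable fun q : (Fin n → ℝ) × ℝ => 2 * |L q.2| :=
      (measurable_const.mul (hLmeas.comp measurable_snd).abs)
    exact measurableSet_le this measurable_const
  have hpair : ∀ l k : ℕ, Measurable fun q : (Fin n → ℝ) × ℝ =>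
      sfun l q.2 + q.1 (idx l) - (sfun k q.2 + q.1 (idx k)) := by
    intro l k
    exact (((hsfunmeas l).comp measurable_snd).add
      ((measurable_pi_apply _).comp measurable_fst)).sub
      (((hsfunmeas k).comp measurable_snd).add
      ((measurable_pi_apply _).comp measurable_fst))
  have hCmaxmeas : MeasurableSet Cmax := by
    have hrw : Cmax = {q : (Fin n → ℝ) × ℝ | good q.2} ∩
        ⋃ k ∈ (Finset.Icc 1 n : Finset ℕ), ({q : (Fin n → ℝ) × ℝ | k ∈ S} ∩
          ⋂ l ∈ (Finset.Icc 1 n : Finset ℕ),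
            {q : (Fin n → ℝ) × ℝ | sfun l q.2 + q.1 (idx l) ≤ sfun k q.2 + q.1 (idx k)}) := by
      ext q
      simp only [hCmax, Set.mem_setOf_eq, Set.mem_inter_iff, Set.mem_iUnion, Set.mem_iInter,
        exists_prop]
      try tauto
    rw [hrw]
    refine hgoodmeas.inter
      (MeasurableSet.biUnion (Finset.Icc 1 n).countable_toSet fun k _ => ?_)
    refine (MeasurableSet.const _).inter
      (MeasurableSet.biInter (Finset.Icc 1 n).countable_toSet fun l _ => ?_)
    have : {q : (Fin n → ℝ) × ℝ | sfun l q.2 + q.1 (idx l) ≤ sfun k q.2 + q.1 (idx k)}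
        = (fun q : (Fin n → ℝ) × ℝ =>
            sfun l q.2 + q.1 (idx l) - (sfun k q.2 + q.1 (idx k))) ⁻¹' Set.Iic 0 := by
      ext q
      simp [sub_nonpos]
    rw [this]
    exact (hpair l k) measurableSet_Iic
  have hCstrmeas : MeasurableSet Cstr := by
    have hrw : Cstr = {q : (Fin n → ℝ) × ℝ | good q.2} ∩
        ⋃ k ∈ (Finset.Icc 1 n : Finset ℕ), ({q : (Fin n → ℝ) × ℝ | k ∈ S} ∩
          ⋂ l ∈ (Finset.Icc 1 n : Finset ℕ),
            {q : (Fin n → ℝ) × ℝ | l ≠ k →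
              sfun l q.2 + q.1 (idx l) < sfun k q.2 + q.1 (idx k)}) := by
      ext q
      simp only [hCstr, Set.mem_setOf_eq, Set.mem_inter_iff, Set.mem_iUnion, Set.mem_iInter,
        exists_prop]
      try tauto
    rw [hrw]
    refine hgoodmeas.inter
      (MeasurableSet.biUnion (Finset.Icc 1 n).countable_toSet fun k _ => ?_)
    refine (MeasurableSet.const _).inter
      (MeasurableSet.biInter (Finset.Icc 1 n).countable_toSet fun l _ => ?_)
    by_cases hlk : l = k
    · have : {q : (Fin n → ℝ) × ℝ | l ≠ k →
          sfun l q.2 + q.1 (idx l) < sfun k q.2 + q.1 (idx k)} = Set.univ := by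
        ext q
        simp [hlk]
      rw [this]
      exact MeasurableSet.univ
    · have : {q : (Fin n → ℝ) × ℝ | l ≠ k →
          sfun l q.2 + q.1 (idx l) < sfun k q.2 + q.1 (idx k)}
          = (fun q : (Fin n → ℝ) × ℝ =>
              sfun l q.2 + q.1 (idx l) - (sfun k q.2 + q.1 (idx k))) ⁻¹' Set.Iio 0 := by
        ext q
        simp [hlk, sub_neg]
      rw [this]
      exact (hpair l k) measurableSet_Iio
  set ν : Measure (Fin n → ℝ) := Measure.pi fun _ : Fin n => laplaceMeasure b with hν
  haveI : IsProbabilityMeasure ν := by rw [hν]; infer_instance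
  have htrans : Prb {ω | (Zvec ω, ξ ω) ∈ Cmax}
      = (ν.prod (densityMeasure Pi)) Cmax := by
    refine indep_transfer Prb n Z ξ hZmeas hξmeas _ _ (fun k => ?_) hξlaw hindep hCmaxmeas
    exact hZlaw _ (Finset.mem_Icc.2 ⟨by omega, by omega⟩)
  have htrans' : Prb {ω | (Zvec ω, ξ' ω) ∈ Cstr}
      = (ν.prod (densityMeasure Pi')) Cstr := by
    refine indep_transfer Prb n Z ξ' hZmeas hξ'meas _ _ (fun k => ?_) hξ'law hindep' hCstrmeas
    exact hZlaw _ (Finset.mem_Icc.2 ⟨by omega, by omega⟩)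
  -- Step A
  have hKsub : {ω | K ω ∈ S} ⊆ {ω | ¬ good (ξ ω)} ∪ {ω | (Zvec ω, ξ ω) ∈ Cmax} := by
    intro ω hω
    by_cases hg : good (ξ ω)
    · right
      refine ⟨hg, K ω, (hK ω).1, hω, fun l hl => ?_⟩
      have h2 := (hK ω).2 l hl
      rw [hsum_eq, hsum_eq] at h2
      have e1 : Zvec ω (idx l) = Z l ω := by
        show Z ((idx l : ℕ) + 1) ω = Z l ω
        rw [hidx_val l hl]
      have e2 : Zvec ω (idx (K ω)) = Z (K ω) ω := by
        show Z ((idx (K ω) : ℕ) + 1) ω = Z (K ω) ω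
        rw [hidx_val (K ω) (hK ω).1]
      show sfun l (ξ ω) + Zvec ω (idx l) ≤ sfun (K ω) (ξ ω) + Zvec ω (idx (K ω))
      rw [e1, e2]
      exact h2
    · left; exact hg
  -- Step D
  have hK'sub : {ω | (Zvec ω, ξ' ω) ∈ Cstr} ⊆ {ω | K' ω ∈ S} := by
    rintro ω ⟨hg, k, hkI, hkS, hstrict⟩
    have hKeq : K' ω = k := by
      by_contra hne
      have h1 := hstrict (K' ω) (hK' ω).1 hne
      have h2 := (hK' ω).2 k hkI
      rw [hsum_eq, hsum_eq] at h2
      have e1 : Zvec ω (idx (K' ω)) = Z (K' ω) ω := by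
        show Z ((idx (K' ω) : ℕ) + 1) ω = Z (K' ω) ω
        rw [hidx_val (K' ω) (hK' ω).1]
      have e2 : Zvec ω (idx k) = Z k ω := by
        show Z ((idx k : ℕ) + 1) ω = Z k ω
        rw [hidx_val k hkI]
      replace h1 : sfun (K' ω) (ξ' ω) + Zvec ω (idx (K' ω))
          < sfun k (ξ' ω) + Zvec ω (idx k) := h1
      rw [e1, e2] at h1
      linarith
    show K' ω ∈ S
    rw [hKeq]; exact hkS
  -- Step B
  have hbadξ : Prb {ω | ¬ good (ξ ω)} ≤ ENNReal.ofReal (δ / 2) := by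
    have hset : {ω | ¬ good (ξ ω)} = ξ ⁻¹' {v | A < 2 * |Real.log (P₁ v / P₀ v)|} := by
      ext ω
      simp only [Set.mem_setOf_eq, Set.mem_preimage, hgood, not_le, hL]
    have hmeas : MeasurableSet {v : ℝ | A < 2 * |Real.log (P₁ v / P₀ v)|} :=
      measurableSet_lt measurable_const (measurable_const.mul hLmeas.abs)
    rw [hset, ← Measure.map_apply hξmeas hmeas, hξlaw]
    exact bad_bound P₀ P₁ hSne hSbdd hA Pi hPi
  have hbadμ' : densityMeasure Pi' {v | ¬ good v} ≤ ENNReal.ofReal (δ / 2) := by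
    have hset : {v : ℝ | ¬ good v} = {v | A < 2 * |Real.log (P₁ v / P₀ v)|} := by
      ext v
      simp only [Set.mem_setOf_eq, hgood, not_le, hL]
    rw [hset]
    exact bad_bound P₀ P₁ hSne hSbdd hA Pi' hPi'
  -- the η-approximate bound
  have key : ∀ η : ℝ, 0 < η →
      Prb {ω | K ω ∈ S} ≤ ENNReal.ofReal (Real.exp (ε + η)) * Prb {ω | K' ω ∈ S}
        + ENNReal.ofReal δ := by
    intro η hη
    set t := b * (ε + η) with ht_def
    have ht0 : 0 ≤ t := le_of_lt (mul_pos hb (by linarith))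
    have htb : t / b = ε + η := by
      rw [ht_def]; field_simp
    have hbε : b * ε = A := by
      rw [hb_def]; field_simp
    have hAt : A < t := by
      rw [ht_def, ← hbε]
      nlinarith
    set Wmax : ℝ → ℕ → Set (Fin n → ℝ) := fun v k =>
      {z | ∀ l ∈ Finset.Icc 1 n, sfun l v + z (idx l) ≤ sfun k v + z (idx k)} with hWmax
    set Wstr : ℝ → ℕ → Set (Fin n → ℝ) := fun v k =>
      {z | ∀ l ∈ Finset.Icc 1 n, l ≠ k → sfun l v + z (idx l) < sfun k v + z (idx k)} with hWstr
    have hWstrmeas : ∀ (v : ℝ) (k : ℕ), MeasurableSet (Wstr v k) := by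
      intro v k
      have hrw : Wstr v k = ⋂ l ∈ (Finset.Icc 1 n : Finset ℕ),
          {z : Fin n → ℝ | l ≠ k → sfun l v + z (idx l) < sfun k v + z (idx k)} := by
        ext z
        simp only [hWstr, Set.mem_setOf_eq, Set.mem_iInter]
      rw [hrw]
      refine MeasurableSet.biInter (Finset.Icc 1 n).countable_toSet fun l _ => ?_
      by_cases hlk : l = k
      · have : {z : Fin n → ℝ | l ≠ k → sfun l v + z (idx l) < sfun k v + z (idx k)}
            = Set.univ := by
          ext z; simp [hlk]
        rw [this]; exact MeasurableSet.univ
      · have : {z : Fin n → ℝ | l ≠ k → sfun l v + z (idx l) < sfun k v + z (idx k)}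
            = {z : Fin n → ℝ | sfun l v + z (idx l) < sfun k v + z (idx k)} := by
          ext z; simp [hlk]
        rw [this]
        exact measurableSet_lt (measurable_const.add (measurable_pi_apply _))
          (measurable_const.add (measurable_pi_apply _))
    have hdif : ∀ (m : ℕ) (v₁ v₂ : ℝ), sfun m v₁ - sfun m v₂
        = if m ≤ j then L v₁ - L v₂ else 0 := by
      intro m v₁ v₂
      simp only [hsfun]
      split_ifs <;> ring
    have hcore : ∀ v v', good v → good v' → ∀ k ∈ Finset.Icc 1 n,
        ν (Wmax v k) ≤ ENNReal.ofReal (Real.exp (ε + η)) * ν (Wstr v' k) := by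
      intro v v' hgv hgv' k hkI
      have hLL : |L v - L v'| ≤ A := by
        have h1 : 2 * |L v| ≤ A := hgv
        have h2 : 2 * |L v'| ≤ A := hgv'
        have h3 : |L v - L v'| ≤ |L v| + |L v'| := abs_sub _ _
        linarith
      have habs := abs_le.1 hLL
      have hsubset : Wmax v k ⊆
          (fun z => Function.update z (idx k) (z (idx k) + t)) ⁻¹' (Wstr v' k) := by
        intro z hz
        intro l hl hlk
        have hne : idx l ≠ idx k := hidx_inj l hl k hkI hlk
        simp only [Function.update_of_ne hne, Function.update_self]
        have hz1 := hz l hl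
        have hd : (sfun k v - sfun k v') - (sfun l v - sfun l v') < t := by
          rw [hdif, hdif]
          split_ifs <;> simp <;> linarith
        linarith
      calc ν (Wmax v k)
          ≤ ν ((fun z => Function.update z (idx k) (z (idx k) + t)) ⁻¹' (Wstr v' k)) :=
            measure_mono hsubset
        _ ≤ ENNReal.ofReal (Real.exp (t / b)) * ν (Wstr v' k) := by
            rw [hν]
            exact pi_laplace_shift hb (idx k) ht0 (hWstrmeas v' k)
        _ = ENNReal.ofReal (Real.exp (ε + η)) * ν (Wstr v' k) := by rw [htb]
    set KS := (Finset.Icc 1 n).filter (· ∈ S) with hKS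
    have hsliceCmax : ∀ v, {z | (z, v) ∈ Cmax} ⊆ ⋃ k ∈ KS, Wmax v k := by
      rintro v z ⟨hgv, k, hkI, hkS, hall⟩
      exact Set.mem_biUnion (Finset.mem_filter.2 ⟨hkI, hkS⟩) hall
    have hsliceCstr : ∀ v, good v → ∀ k ∈ KS, Wstr v k ⊆ {z | (z, v) ∈ Cstr} := by
      intro v hgv k hk z hzk
      have hk' := Finset.mem_filter.1 hk
      exact ⟨hgv, k, hk'.1, hk'.2, hzk⟩
    have hdisj : ∀ v, Set.PairwiseDisjoint (KS : Set ℕ) (Wstr v) := by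
      intro v k hk k' hk' hne
      refine Set.disjoint_left.2 fun z hzk hzk' => ?_
      have hkI := (Finset.mem_filter.1 hk).1
      have hk'I := (Finset.mem_filter.1 hk').1
      have h1 := hzk k' hk'I (Ne.symm hne)
      have h2 := hzk' k hkI hne
      linarith
    set β := ENNReal.ofReal (Real.exp (ε + η)) with hβ
    set c' := (ν.prod (densityMeasure Pi')) Cstr with hc'
    have hGmeas' : MeasurableSet {v : ℝ | good v} :=
      measurableSet_le (measurable_const.mul hLmeas.abs) measurable_const
    have hslicemeas' : Measurable fun v' : ℝ => ν ((fun z => (z, v')) ⁻¹' Cstr) :=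
      measurable_measure_prodMk_right hCstrmeas
    have hpoint : ∀ v : ℝ, ν {z | (z, v) ∈ Cmax} ≤ ENNReal.ofReal (δ / 2) + β * c' := by
      intro v
      by_cases hgv : good v
      · have hFG : ∀ v', good v' →
            ν {z | (z, v) ∈ Cmax} ≤ β * ν {z | (z, v') ∈ Cstr} := by
          intro v' hgv'
          calc ν {z | (z, v) ∈ Cmax}
              ≤ ν (⋃ k ∈ KS, Wmax v k) := measure_mono (hsliceCmax v)
            _ ≤ ∑ k ∈ KS, ν (Wmax v k) := measure_biUnion_finset_le _ _
            _ ≤ ∑ k ∈ KS, β * ν (Wstr v' k) :=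
                Finset.sum_le_sum fun k hk =>
                  hcore v v' hgv hgv' k (Finset.mem_filter.1 hk).1
            _ = β * ∑ k ∈ KS, ν (Wstr v' k) := (Finset.mul_sum _ _ _).symm
            _ = β * ν (⋃ k ∈ KS, Wstr v' k) := by
                rw [measure_biUnion_finset (hdisj v') (fun k _ => hWstrmeas v' k)]
            _ ≤ β * ν {z | (z, v') ∈ Cstr} :=
                mul_le_mul_right
                  (measure_mono (Set.iUnion₂_subset (hsliceCstr v' hgv'))) β
        have hsplit : (densityMeasure Pi') {v' | good v'}
            + (densityMeasure Pi') {v' | good v'}ᶜ = 1 :=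
          (measure_add_measure_compl hGmeas').trans measure_univ
        have hν1 : ν {z | (z, v) ∈ Cmax} ≤ 1 := prob_le_one
        have hcompl : ({v' : ℝ | good v'}ᶜ : Set ℝ) = {v' | ¬ good v'} := by
          ext v'; simp
        calc ν {z | (z, v) ∈ Cmax}
            = ν {z | (z, v) ∈ Cmax} * ((densityMeasure Pi') {v' | good v'}
                + (densityMeasure Pi') {v' | good v'}ᶜ) := by rw [hsplit, mul_one]
          _ = ν {z | (z, v) ∈ Cmax} * (densityMeasure Pi') {v' | good v'}
              + ν {z | (z, v) ∈ Cmax} * (densityMeasure Pi') {v' | good v'}ᶜ := mul_add _ _ _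
          _ ≤ β * c' + ENNReal.ofReal (δ / 2) := by
              refine add_le_add ?_ ?_
              · calc ν {z | (z, v) ∈ Cmax} * (densityMeasure Pi') {v' | good v'}
                    = ∫⁻ _ in {v' | good v'}, ν {z | (z, v) ∈ Cmax} ∂(densityMeasure Pi') := by
                      rw [setLIntegral_const]
                  _ ≤ ∫⁻ v' in {v' | good v'}, β * ν ((fun z => (z, v')) ⁻¹' Cstr)
                        ∂(densityMeasure Pi') := by
                      refine setLIntegral_mono (measurable_const.mul hslicemeas') ?_
                      intro v' hv'
                      exact hFG v' hv'
                  _ ≤ ∫⁻ v', β * ν ((fun z => (z, v')) ⁻¹' Cstr) ∂(densityMeasure Pi') :=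
                      setLIntegral_le_lintegral _ _
                  _ = β * ∫⁻ v', ν ((fun z => (z, v')) ⁻¹' Cstr) ∂(densityMeasure Pi') :=
                      lintegral_const_mul' _ _ ENNReal.ofReal_ne_top
                  _ = β * c' := by rw [hc', Measure.prod_apply_symm hCstrmeas]
              · calc ν {z | (z, v) ∈ Cmax} * (densityMeasure Pi') {v' | good v'}ᶜ
                    ≤ 1 * ENNReal.ofReal (δ / 2) := by
                      refine mul_le_mul' hν1 ?_
                      rw [hcompl]
                      exact hbadμ'
                  _ = ENNReal.ofReal (δ / 2) := one_mul _
          _ = ENNReal.ofReal (δ / 2) + β * c' := add_comm _ _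
      · have hempty : {z | (z, v) ∈ Cmax} = ∅ := by
          ext z
          simp only [Set.mem_setOf_eq, hCmax, Set.mem_empty_iff_false, iff_false]
          rintro ⟨hg, -⟩
          exact hgv hg
        rw [hempty]
        simp
    have hc'K' : c' ≤ Prb {ω | K' ω ∈ S} := by
      have h1 : c' = Prb {ω | (Zvec ω, ξ' ω) ∈ Cstr} := htrans'.symm
      rw [h1]
      exact measure_mono hK'sub
    calc Prb {ω | K ω ∈ S}
        ≤ Prb ({ω | ¬ good (ξ ω)} ∪ {ω | (Zvec ω, ξ ω) ∈ Cmax}) := measure_mono hKsub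
      _ ≤ Prb {ω | ¬ good (ξ ω)} + Prb {ω | (Zvec ω, ξ ω) ∈ Cmax} := measure_union_le _ _
      _ ≤ ENNReal.ofReal (δ / 2) + (ν.prod (densityMeasure Pi)) Cmax :=
          add_le_add hbadξ (le_of_eq htrans)
      _ = ENNReal.ofReal (δ / 2)
          + ∫⁻ v, ν ((fun z => (z, v)) ⁻¹' Cmax) ∂(densityMeasure Pi) := by
          rw [Measure.prod_apply_symm hCmaxmeas]
      _ ≤ ENNReal.ofReal (δ / 2) + (ENNReal.ofReal (δ / 2) + β * c') := by
          refine add_le_add_right ?_ _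
          calc ∫⁻ v, ν ((fun z => (z, v)) ⁻¹' Cmax) ∂(densityMeasure Pi)
              ≤ ∫⁻ _, (ENNReal.ofReal (δ / 2) + β * c') ∂(densityMeasure Pi) :=
                lintegral_mono fun v => hpoint v
            _ = ENNReal.ofReal (δ / 2) + β * c' := by
                rw [lintegral_const, measure_univ, mul_one]
      _ ≤ β * Prb {ω | K' ω ∈ S} + ENNReal.ofReal δ := by
          have hrw : ENNReal.ofReal (δ / 2) + (ENNReal.ofReal (δ / 2) + β * c')
              = β * c' + ENNReal.ofReal δ := by
            rw [← add_assoc, ← ENNReal.ofReal_add (by linarith) (by linarith), add_halves,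
              add_comm]
          rw [hrw]
          exact add_le_add_left (mul_le_mul_right hc'K' β) _
  -- limit η → 0
  have hlim : Filter.Tendsto
      (fun i : ℕ => ENNReal.ofReal (Real.exp (ε + 1 / (i + 1))) * Prb {ω | K' ω ∈ S}
        + ENNReal.ofReal δ) Filter.atTop
      (nhds (ENNReal.ofReal (Real.exp ε) * Prb {ω | K' ω ∈ S} + ENNReal.ofReal δ)) := by
    have h1 : Filter.Tendsto (fun i : ℕ => ε + 1 / ((i : ℝ) + 1)) Filter.atTop (nhds ε) := by
      have := tendsto_one_div_add_atTop_nhds_zero_nat (𝕜 := ℝ)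
      simpa using Filter.Tendsto.add (tendsto_const_nhds (x := ε)) this
    have h2 : Filter.Tendsto (fun i : ℕ => ENNReal.ofReal (Real.exp (ε + 1 / (i + 1))))
        Filter.atTop (nhds (ENNReal.ofReal (Real.exp ε))) :=
      (ENNReal.continuous_ofReal.tendsto _).comp ((Real.continuous_exp.tendsto _).comp h1)
    exact (ENNReal.Tendsto.mul_const h2 (Or.inl (ENNReal.ofReal_pos.2 (Real.exp_pos ε)).ne')).add tendsto_const_nhds
  refine ge_of_tendsto' hlim fun i => key (1 / (i + 1)) (by positivity)
end

section
/- Let P_0, P_1 be probability densities, fix i ∈ {0,1}, and let x ~ P_i. Define Y = −log(2P_i(x)/(P_0(x)+P_1(x))) and U = Y − E[Y] = Y + D_KL(P_i || (P_0+P_1)/2). Then E[exp(|U|) − 1 − |U|] ≤ 2. In particular, with D = D_KL(P_i||(P_0+P_1)/2), E[exp(|U|)] ≤ e^{−D} + 2e^{D}. -/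
open MeasureTheory ProbabilityTheory
open scoped NNReal ENNReal

lemma aux_exp_abs_le (t : ℝ) : Real.exp |t| ≤ Real.exp t + Real.exp (-t) := by
  rcases abs_cases t with ⟨h, _⟩ | ⟨h, _⟩ <;> rw [h] <;>
    nlinarith [Real.exp_pos t, Real.exp_pos (-t)]

lemma aux_exp_abs_sub (t : ℝ) : Real.exp |t| - 1 - |t| ≤ Real.exp t + Real.exp (-t) - 2 := by
  rcases abs_cases t with ⟨h, _⟩ | ⟨h, _⟩ <;> rw [h] <;>
    nlinarith [Real.add_one_le_exp t, Real.add_one_le_exp (-t)]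

lemma aux_nonneg (t : ℝ) : 0 ≤ Real.exp |t| - 1 - |t| := by
  nlinarith [Real.add_one_le_exp |t|]

lemma aux_integrable (P : ℝ → ℝ) (h : IsDensity P) : Integrable P := by
  by_contra hc
  have h0 := integral_undef hc
  rw [h.integral_one] at h0
  exact one_ne_zero h0

lemma aux_integral_density (P : ℝ → ℝ) (hm : Measurable P) (hnn : ∀ x, 0 ≤ P x) (g : ℝ → ℝ) :
    ∫ x, g x ∂(densityMeasure P) = ∫ x, P x * g x := by
  rw [densityMeasure]
  have h : (fun x => ENNReal.ofReal (P x)) = fun x => ((P x).toNNReal : ℝ≥0∞) := rfl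
  rw [h, integral_withDensity_eq_integral_smul hm.real_toNNReal g]
  congr 1; ext x
  simp [NNReal.smul_def, Real.coe_toNNReal _ (hnn x)]

/-- the Bernstein moment condition for the mixture log-likelihood
ratio.  Fix `i ∈ {0,1}` and let `x ~ P_i` (here `P ∈ {P₀, P₁}`).  With
`Y = -log (2 P x / (P₀ x + P₁ x))`, `D = D_KL(P_i‖(P₀+P₁)/2)`, and `U = Y + D`
(so `U = Y - E[Y]`), one has `E[exp |U| - 1 - |U|] ≤ 2` and, in particular,
`E[exp |U|] ≤ e^{-D} + 2 e^{D}`. -/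
theorem bernstein_moment_condition (P₀ P₁ P : ℝ → ℝ)
    (hP₀ : IsDensity P₀) (hP₁ : IsDensity P₁) (hP : P = P₀ ∨ P = P₁) :
    (∫ x, (Real.exp |(-Real.log (2 * P x / (P₀ x + P₁ x)))
              + klDivR P (fun y => (P₀ y + P₁ y) / 2)|
          - 1
          - |(-Real.log (2 * P x / (P₀ x + P₁ x)))
              + klDivR P (fun y => (P₀ y + P₁ y) / 2)|) ∂(densityMeasure P)) ≤ 2 ∧
    (∫ x, Real.exp |(-Real.log (2 * P x / (P₀ x + P₁ x)))
              + klDivR P (fun y => (P₀ y + P₁ y) / 2)| ∂(densityMeasure P))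
      ≤ Real.exp (-(klDivR P (fun y => (P₀ y + P₁ y) / 2)))
        + 2 * Real.exp (klDivR P (fun y => (P₀ y + P₁ y) / 2)) := by
  have hPm : Measurable P := by rcases hP with rfl | rfl; exacts [hP₀.measurable, hP₁.measurable]
  have hPnn : ∀ x, 0 ≤ P x := by rcases hP with rfl | rfl; exacts [hP₀.nonneg, hP₁.nonneg]
  have hP1 : ∫ x, P x = 1 := by
    rcases hP with rfl | rfl; exacts [hP₀.integral_one, hP₁.integral_one]
  have hPle : ∀ x, P x ≤ P₀ x + P₁ x := by
    intro x; rcases hP with rfl | rfl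
    · linarith [hP₁.nonneg x]
    · linarith [hP₀.nonneg x]
  have hPint : Integrable P := by
    rcases hP with rfl | rfl; exacts [aux_integrable _ hP₀, aux_integrable _ hP₁]
  have hQint : Integrable (fun x => (P₀ x + P₁ x) / 2) :=
    ((aux_integrable _ hP₀).add (aux_integrable _ hP₁)).div_const 2
  have hQ1 : ∫ x, (P₀ x + P₁ x) / 2 = 1 := by
    rw [integral_div, integral_add (aux_integrable _ hP₀) (aux_integrable _ hP₁),
      hP₀.integral_one, hP₁.integral_one]
    norm_num
  set D := klDivR P (fun y => (P₀ y + P₁ y) / 2) with hDdef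
  -- D = the Lebesgue integral of f₃
  have hDeq : D = ∫ x, P x * Real.log (P x / ((P₀ x + P₁ x) / 2)) := rfl
  -- pointwise bounds on the KL integrand
  have hub : ∀ x, P x * Real.log (P x / ((P₀ x + P₁ x) / 2)) ≤ P x * Real.log 2 := by
    intro x
    rcases eq_or_lt_of_le (hPnn x) with h | h
    · rw [← h]; simp
    · have hs : 0 < P₀ x + P₁ x := lt_of_lt_of_le h (hPle x)
      have hq : 0 < (P₀ x + P₁ x) / 2 := by linarith
      have hr : P x / ((P₀ x + P₁ x) / 2) ≤ 2 := by
        rw [div_le_iff₀ hq]; linarith [hPle x]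
      have hlog : Real.log (P x / ((P₀ x + P₁ x) / 2)) ≤ Real.log 2 :=
        Real.log_le_log (by positivity) hr
      exact mul_le_mul_of_nonneg_left hlog (hPnn x)
  have hlb : ∀ x, P x - (P₀ x + P₁ x) / 2 ≤ P x * Real.log (P x / ((P₀ x + P₁ x) / 2)) := by
    intro x
    rcases eq_or_lt_of_le (hPnn x) with h | h
    · rw [← h]; simp; linarith [hP₀.nonneg x, hP₁.nonneg x]
    · have hs : 0 < P₀ x + P₁ x := lt_of_lt_of_le h (hPle x)
      have hq : 0 < (P₀ x + P₁ x) / 2 := by linarith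
      have h1 : Real.log (((P₀ x + P₁ x) / 2) / P x) ≤ ((P₀ x + P₁ x) / 2) / P x - 1 :=
        Real.log_le_sub_one_of_pos (by positivity)
      have h2 : Real.log (P x / ((P₀ x + P₁ x) / 2))
          = -Real.log (((P₀ x + P₁ x) / 2) / P x) := by
        rw [← Real.log_inv, inv_div]
      have h3 : ((P₀ x + P₁ x) / 2) / P x * P x = (P₀ x + P₁ x) / 2 :=
        div_mul_cancel₀ _ (ne_of_gt h)
      rw [h2]
      nlinarith [h1, h]
  have hf3m : Measurable (fun x => P x * Real.log (P x / ((P₀ x + P₁ x) / 2))) :=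
    hPm.mul (Real.measurable_log.comp
      (hPm.div ((hP₀.measurable.add hP₁.measurable).div_const 2)))
  have hf3int : Integrable (fun x => P x * Real.log (P x / ((P₀ x + P₁ x) / 2))) := by
    apply Integrable.mono'
      (g := fun x => |P x - (P₀ x + P₁ x) / 2| + P x * Real.log 2)
      (((hPint.sub hQint).abs).add (hPint.mul_const _)) hf3m.aestronglyMeasurable
    filter_upwards with x
    rw [Real.norm_eq_abs, abs_le]
    have hl2 : (0:ℝ) ≤ Real.log 2 := Real.log_nonneg one_le_two
    have hnn := mul_nonneg (hPnn x) hl2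
    constructor
    · have := hlb x
      have habs : -(|P x - (P₀ x + P₁ x) / 2|) ≤ P x - (P₀ x + P₁ x) / 2 := neg_abs_le _
      linarith
    · have := hub x
      have habs : (0:ℝ) ≤ |P x - (P₀ x + P₁ x) / 2| := abs_nonneg _
      linarith
  have hD0 : 0 ≤ D := by
    have hmono : ∫ x, (P x - (P₀ x + P₁ x) / 2)
        ≤ ∫ x, P x * Real.log (P x / ((P₀ x + P₁ x) / 2)) :=
      integral_mono (hPint.sub hQint) hf3int hlb
    rw [integral_sub hPint hQint, hP1, hQ1] at hmono
    rw [hDeq]; linarith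
  have hDle : D ≤ Real.log 2 := by
    have hmono : ∫ x, P x * Real.log (P x / ((P₀ x + P₁ x) / 2))
        ≤ ∫ x, P x * Real.log 2 :=
      integral_mono hf3int (hPint.mul_const _) hub
    rw [integral_mul_const, hP1, one_mul] at hmono
    rw [hDeq]; linarith
  -- the key pointwise tilted bounds
  have hExpY : ∀ x, P x * Real.exp (-Real.log (2 * P x / (P₀ x + P₁ x)))
      ≤ (P₀ x + P₁ x) / 2 := by
    intro x
    rcases eq_or_lt_of_le (hPnn x) with h | h
    · rw [← h, zero_mul]; linarith [hP₀.nonneg x, hP₁.nonneg x]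
    · have hs : 0 < P₀ x + P₁ x := lt_of_lt_of_le h (hPle x)
      have hr : 0 < 2 * P x / (P₀ x + P₁ x) := by positivity
      rw [Real.exp_neg, Real.exp_log hr]
      have heq : P x * (2 * P x / (P₀ x + P₁ x))⁻¹ = (P₀ x + P₁ x) / 2 := by
        field_simp
      rw [heq]
  have hExpnegY : ∀ x, P x * Real.exp (-(-Real.log (2 * P x / (P₀ x + P₁ x))))
      ≤ 2 * P x := by
    intro x
    rcases eq_or_lt_of_le (hPnn x) with h | h
    · rw [← h]; simp
    · have hs : 0 < P₀ x + P₁ x := lt_of_lt_of_le h (hPle x)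
      have hr : 0 < 2 * P x / (P₀ x + P₁ x) := by positivity
      rw [neg_neg, Real.exp_log hr]
      have hr2 : 2 * P x / (P₀ x + P₁ x) ≤ 2 := by
        rw [div_le_iff₀ hs]; nlinarith [hPle x]
      nlinarith
  -- the integrable dominating function
  have hgint : Integrable (fun x =>
      Real.exp D * ((P₀ x + P₁ x) / 2) + Real.exp (-D) * (2 * P x)) :=
    (hQint.const_mul _).add ((hPint.const_mul 2).const_mul _)
  have hgval : ∫ x, (Real.exp D * ((P₀ x + P₁ x) / 2) + Real.exp (-D) * (2 * P x))
      = Real.exp D + Real.exp (-D) * 2 := by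
    rw [integral_add (hQint.const_mul _) ((hPint.const_mul 2).const_mul _),
      integral_const_mul, integral_const_mul, integral_const_mul, hQ1, hP1]
    ring
  -- the pointwise split of P * (exp U + exp (-U))
  have hsplit : ∀ x,
      P x * (Real.exp ((-Real.log (2 * P x / (P₀ x + P₁ x))) + D)
        + Real.exp (-((-Real.log (2 * P x / (P₀ x + P₁ x))) + D)))
      ≤ Real.exp D * ((P₀ x + P₁ x) / 2) + Real.exp (-D) * (2 * P x) := by
    intro x
    have h1 : P x * Real.exp ((-Real.log (2 * P x / (P₀ x + P₁ x))) + D)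
        = Real.exp D * (P x * Real.exp (-Real.log (2 * P x / (P₀ x + P₁ x)))) := by
      rw [Real.exp_add]; ring
    have h2 : P x * Real.exp (-((-Real.log (2 * P x / (P₀ x + P₁ x))) + D))
        = Real.exp (-D) * (P x * Real.exp (-(-Real.log (2 * P x / (P₀ x + P₁ x))))) := by
      rw [neg_add, Real.exp_add]; ring
    have h3 := hExpY x
    have h4 := hExpnegY x
    have h5 := (Real.exp_pos D).le
    have h6 := (Real.exp_pos (-D)).le
    nlinarith [mul_le_mul_of_nonneg_left h3 h5, mul_le_mul_of_nonneg_left h4 h6]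
  have heD : Real.exp D ≤ 2 := by
    calc Real.exp D ≤ Real.exp (Real.log 2) := Real.exp_le_exp.2 hDle
      _ = 2 := Real.exp_log two_pos
  have henD : Real.exp (-D) ≤ 1 := by
    calc Real.exp (-D) ≤ Real.exp 0 := Real.exp_le_exp.2 (by linarith)
      _ = 1 := Real.exp_zero
  constructor
  · rw [aux_integral_density P hPm hPnn]
    have hmono : ∫ x, P x * (Real.exp |(-Real.log (2 * P x / (P₀ x + P₁ x))) + D| - 1
          - |(-Real.log (2 * P x / (P₀ x + P₁ x))) + D|)
        ≤ ∫ x, (Real.exp D * ((P₀ x + P₁ x) / 2) + Real.exp (-D) * (2 * P x) - 2 * P x) := by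
      apply integral_mono_of_nonneg
      · filter_upwards with x
        exact mul_nonneg (hPnn x) (aux_nonneg _)
      · exact hgint.sub (hPint.const_mul 2)
      · filter_upwards with x
        have hB := aux_exp_abs_sub ((-Real.log (2 * P x / (P₀ x + P₁ x))) + D)
        have h7 := mul_le_mul_of_nonneg_left hB (hPnn x)
        have h8 := hsplit x
        nlinarith
    have hval : ∫ x, (Real.exp D * ((P₀ x + P₁ x) / 2) + Real.exp (-D) * (2 * P x) - 2 * P x)
        = Real.exp D + Real.exp (-D) * 2 - 2 := by
      rw [integral_sub hgint (hPint.const_mul 2), hgval, integral_const_mul, hP1]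
      ring
    rw [hval] at hmono
    calc ∫ x, P x * (Real.exp |(-Real.log (2 * P x / (P₀ x + P₁ x))) + D| - 1
          - |(-Real.log (2 * P x / (P₀ x + P₁ x))) + D|)
        ≤ Real.exp D + Real.exp (-D) * 2 - 2 := hmono
      _ ≤ 2 := by linarith
  · rw [aux_integral_density P hPm hPnn]
    have hmono : ∫ x, P x * Real.exp |(-Real.log (2 * P x / (P₀ x + P₁ x))) + D|
        ≤ ∫ x, (Real.exp D * ((P₀ x + P₁ x) / 2) + Real.exp (-D) * (2 * P x)) := by
      apply integral_mono_of_nonneg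
      · filter_upwards with x
        exact mul_nonneg (hPnn x) (Real.exp_pos _).le
      · exact hgint
      · filter_upwards with x
        have hA := aux_exp_abs_le ((-Real.log (2 * P x / (P₀ x + P₁ x))) + D)
        have h7 := mul_le_mul_of_nonneg_left hA (hPnn x)
        have h8 := hsplit x
        nlinarith
    rw [hgval] at hmono
    have hcmp : Real.exp (-D) ≤ Real.exp D := Real.exp_le_exp.2 (by linarith)
    calc ∫ x, P x * Real.exp |(-Real.log (2 * P x / (P₀ x + P₁ x))) + D|
        ≤ Real.exp D + Real.exp (-D) * 2 := hmono
      _ ≤ Real.exp (-D) + 2 * Real.exp D := by linarith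
end
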